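/- arXiv:1901.00694 — 3 statements merged into one kernel-verified Lean document; each statement's English description precedes it below -/
import Mathlib

section
/- Let f be a complex polynomial with f(0) ≠ 0 whose zeros are simple (distinct) and all satisfy |z| ≥ 1, and for each n ∈ ℕ let p_n be the n-th optimal polynomial approximant to 1/f in the Hardy space H² (weights ω_k = 1 for all k). Then for every compact set K contained in the closed unit disc {z : |z| ≤ 1} with K disjoint from the zero set Z(f) of f, sup_{z ∈ K} |1 − p_n(z) f(z)| → 0 as n → ∞. -/
/-- The squared `H²` (Hardy space) norm of a polynomial `g = ∑ a_k z^k`: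
`∑_k |a_k|²` (weights `ω_k = 1`). -/
noncomputable def hardyNormSq (g : Polynomial ℂ) : ℝ :=
  ∑ k ∈ Finset.range (g.natDegree + 1), ‖g.coeff k‖ ^ 2

open Polynomial Finset Complex

noncomputable def S2 (g : Polynomial ℂ) (M : ℕ) : ℝ :=
  ∑ k ∈ Finset.range M, ‖g.coeff k‖ ^ 2

lemma S2_nonneg (g : Polynomial ℂ) (M : ℕ) : 0 ≤ S2 g M :=
  Finset.sum_nonneg fun _ _ => sq_nonneg _

lemma S2_ext (g : Polynomial ℂ) {M M' : ℕ} (h : M ≤ M') (hM : g.natDegree < M) :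
    S2 g M' = S2 g M := by
  refine (Finset.sum_subset (Finset.range_subset_range.2 h) ?_).symm
  intro k _ hk
  have : g.natDegree < k := lt_of_lt_of_le hM (le_of_not_gt (fun hc => hk (Finset.mem_range.2 hc)))
  simp [Polynomial.coeff_eq_zero_of_natDegree_lt this]

lemma hardyNormSq_eq_S2 (g : Polynomial ℂ) {M : ℕ} (h : g.natDegree < M) :
    hardyNormSq g = S2 g M := by
  have : hardyNormSq g = S2 g (g.natDegree + 1) := rfl
  rw [this, S2_ext g h (Nat.lt_succ_self _)]

noncomputable def nrm (g : Polynomial ℂ) : ℝ := Real.sqrt (hardyNormSq g)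

lemma hardyNormSq_nonneg (g : Polynomial ℂ) : 0 ≤ hardyNormSq g := S2_nonneg g _

lemma nrm_nonneg (g : Polynomial ℂ) : 0 ≤ nrm g := Real.sqrt_nonneg _

lemma nrm_sq (g : Polynomial ℂ) : nrm g ^ 2 = hardyNormSq g :=
  Real.sq_sqrt (hardyNormSq_nonneg g)

lemma nrm_eq_sqrt_S2 (g : Polynomial ℂ) {M : ℕ} (h : g.natDegree < M) :
    nrm g = Real.sqrt (S2 g M) := by rw [nrm, hardyNormSq_eq_S2 g h]

noncomputable def vec (M : ℕ) (g : Polynomial ℂ) : EuclideanSpace ℂ (Fin M) :=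
  WithLp.toLp 2 (fun i => g.coeff i)

lemma norm_vec (M : ℕ) (g : Polynomial ℂ) : ‖vec M g‖ = Real.sqrt (S2 g M) := by
  rw [EuclideanSpace.norm_eq]
  congr 1
  rw [S2, ← Fin.sum_univ_eq_sum_range (fun k => ‖g.coeff k‖ ^ 2) M]
  rfl

lemma nrm_eq_norm_vec (g : Polynomial ℂ) {M : ℕ} (h : g.natDegree < M) :
    nrm g = ‖vec M g‖ := by rw [norm_vec, ← nrm_eq_sqrt_S2 g h]

lemma vec_add (M : ℕ) (a b : Polynomial ℂ) : vec M (a + b) = vec M a + vec M b := by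
  ext i; simp [vec]

lemma nrm_add_le (a b : Polynomial ℂ) : nrm (a + b) ≤ nrm a + nrm b := by
  set M := max (a + b).natDegree (max a.natDegree b.natDegree) + 1 with hM
  have h1 : (a+b).natDegree < M := by simp [hM]
  have h2 : a.natDegree < M := by simp [hM]
  have h3 : b.natDegree < M := by simp [hM]
  rw [nrm_eq_norm_vec _ h1, nrm_eq_norm_vec _ h2, nrm_eq_norm_vec _ h3, vec_add]
  exact norm_add_le _ _

lemma coeff_le_nrm (g : Polynomial ℂ) (k : ℕ) : ‖g.coeff k‖ ≤ nrm g := by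
  rcases le_or_gt k g.natDegree with h | h
  · have hk : k ∈ Finset.range (g.natDegree + 1) := Finset.mem_range.2 (Nat.lt_succ_of_le h)
    have : ‖g.coeff k‖ ^ 2 ≤ hardyNormSq g :=
      Finset.single_le_sum (f := fun k => ‖g.coeff k‖ ^ 2) (fun _ _ => sq_nonneg _) hk
    calc ‖g.coeff k‖ = Real.sqrt (‖g.coeff k‖ ^ 2) := (Real.sqrt_sq (norm_nonneg _)).symm
      _ ≤ nrm g := Real.sqrt_le_sqrt this
  · simp [Polynomial.coeff_eq_zero_of_natDegree_lt h, nrm_nonneg]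

-- arbitrary finset bound from a "range" ℓ¹ bound
lemma sum_norm_coeff_le {u : Polynomial ℂ} {U : ℝ} {N : ℕ} (hN : u.natDegree < N)
    (hU : ∑ a ∈ range N, ‖u.coeff a‖ ≤ U) (s : Finset ℕ) :
    ∑ a ∈ s, ‖u.coeff a‖ ≤ U := by
  have h1 : ∑ a ∈ s, ‖u.coeff a‖ = ∑ a ∈ s.filter (· < N), ‖u.coeff a‖ := by
    refine (Finset.sum_filter_of_ne ?_).symm
    intro a _ ha
    by_contra hc
    exact ha (by
      simp [Polynomial.coeff_eq_zero_of_natDegree_lt (lt_of_lt_of_le hN (le_of_not_gt hc))])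
  rw [h1]
  refine le_trans (Finset.sum_le_sum_of_subset_of_nonneg ?_ (fun _ _ _ => norm_nonneg _)) hU
  intro a ha
  simp only [Finset.mem_filter] at ha
  exact Finset.mem_range.2 ha.2

lemma coeff_mul_range (u v : Polynomial ℂ) (k : ℕ) :
    (u * v).coeff k = ∑ a ∈ range (k + 1), u.coeff a * v.coeff (k - a) := by
  rw [Polynomial.coeff_mul, Finset.Nat.sum_antidiagonal_eq_sum_range_succ_mk]

lemma sum_reflect_norm (h : Polynomial ℂ) (k : ℕ) :
    ∑ a ∈ range (k + 1), ‖h.coeff (k - a)‖ = ∑ a ∈ range (k + 1), ‖h.coeff a‖ := by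
  have := Finset.sum_range_reflect (fun j => ‖h.coeff j‖) (k + 1)
  simpa using this

lemma norm_coeff_mul_le (g h : Polynomial ℂ) {H : ℝ}
    (hH : ∀ s : Finset ℕ, ∑ b ∈ s, ‖h.coeff b‖ ≤ H) (k : ℕ) :
    ‖(g * h).coeff k‖ ≤ H * nrm g := by
  rw [coeff_mul_range]
  calc ‖∑ a ∈ range (k+1), g.coeff a * h.coeff (k - a)‖
      ≤ ∑ a ∈ range (k+1), ‖g.coeff a‖ * ‖h.coeff (k - a)‖ := by
        refine le_trans (norm_sum_le _ _) (le_of_eq ?_)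
        exact Finset.sum_congr rfl fun a _ => norm_mul _ _
    _ ≤ ∑ a ∈ range (k+1), nrm g * ‖h.coeff (k - a)‖ :=
        Finset.sum_le_sum fun a _ => mul_le_mul_of_nonneg_right (coeff_le_nrm g a) (norm_nonneg _)
    _ = nrm g * ∑ a ∈ range (k+1), ‖h.coeff a‖ := by rw [← Finset.mul_sum, sum_reflect_norm]
    _ ≤ nrm g * H := mul_le_mul_of_nonneg_left (hH _) (nrm_nonneg g)
    _ = H * nrm g := mul_comm _ _

lemma nrm_mul_le (u v : Polynomial ℂ) {U : ℝ}
    (hU : ∀ s : Finset ℕ, ∑ a ∈ s, ‖u.coeff a‖ ≤ U) :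
    nrm (u * v) ≤ U * nrm v := by
  have hU0 : 0 ≤ U := le_trans (by simp) (hU ∅)
  set M := max (u * v).natDegree v.natDegree + 1 with hMdef
  have hM1 : (u * v).natDegree < M := by simp [hMdef]
  have hM2 : v.natDegree < M := by simp [hMdef]
  have key : S2 (u * v) M ≤ U ^ 2 * S2 v M := by
    have hk : ∀ k, ‖(u*v).coeff k‖ ^ 2
        ≤ U * ∑ a ∈ range (k+1), ‖u.coeff a‖ * ‖v.coeff (k - a)‖ ^ 2 := by
      intro k
      have step1 : ‖(u*v).coeff k‖ ≤ ∑ a ∈ range (k+1), ‖u.coeff a‖ * ‖v.coeff (k - a)‖ := by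
        rw [coeff_mul_range]
        refine le_trans (norm_sum_le _ _) (le_of_eq ?_)
        exact Finset.sum_congr rfl fun a _ => norm_mul _ _
      have step2 : (∑ a ∈ range (k+1), ‖u.coeff a‖ * ‖v.coeff (k - a)‖) ^ 2
          ≤ (∑ a ∈ range (k+1), ‖u.coeff a‖) *
            (∑ a ∈ range (k+1), ‖u.coeff a‖ * ‖v.coeff (k - a)‖ ^ 2) := by
        have := Finset.sum_mul_sq_le_sq_mul_sq (range (k+1))
          (fun a => Real.sqrt ‖u.coeff a‖)
          (fun a => Real.sqrt ‖u.coeff a‖ * ‖v.coeff (k - a)‖)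
        have e1 : ∀ a, Real.sqrt ‖u.coeff a‖ * (Real.sqrt ‖u.coeff a‖ * ‖v.coeff (k - a)‖)
            = ‖u.coeff a‖ * ‖v.coeff (k - a)‖ := by
          intro a; rw [← mul_assoc, Real.mul_self_sqrt (norm_nonneg _)]
        have e2 : ∀ a, Real.sqrt ‖u.coeff a‖ ^ 2 = ‖u.coeff a‖ :=
          fun a => Real.sq_sqrt (norm_nonneg _)
        have e3 : ∀ a, (Real.sqrt ‖u.coeff a‖ * ‖v.coeff (k - a)‖) ^ 2
            = ‖u.coeff a‖ * ‖v.coeff (k - a)‖ ^ 2 := by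
          intro a; rw [mul_pow, e2]
        calc (∑ a ∈ range (k+1), ‖u.coeff a‖ * ‖v.coeff (k - a)‖) ^ 2
            = (∑ a ∈ range (k+1), Real.sqrt ‖u.coeff a‖ *
               (Real.sqrt ‖u.coeff a‖ * ‖v.coeff (k - a)‖)) ^ 2 := by
              congr 1; exact (Finset.sum_congr rfl fun a _ => e1 a).symm
          _ ≤ (∑ a ∈ range (k+1), Real.sqrt ‖u.coeff a‖ ^ 2) *
              (∑ a ∈ range (k+1), (Real.sqrt ‖u.coeff a‖ * ‖v.coeff (k - a)‖) ^ 2) := this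
          _ = _ := by
              congr 1
              · exact Finset.sum_congr rfl fun a _ => e2 a
              · exact Finset.sum_congr rfl fun a _ => e3 a
      have hT0 : 0 ≤ ∑ a ∈ range (k+1), ‖u.coeff a‖ * ‖v.coeff (k - a)‖ ^ 2 :=
        Finset.sum_nonneg fun a _ => mul_nonneg (norm_nonneg _) (sq_nonneg _)
      calc ‖(u*v).coeff k‖ ^ 2
          ≤ (∑ a ∈ range (k+1), ‖u.coeff a‖ * ‖v.coeff (k - a)‖) ^ 2 :=
            pow_le_pow_left₀ (norm_nonneg _) step1 2
        _ ≤ (∑ a ∈ range (k+1), ‖u.coeff a‖) *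
            (∑ a ∈ range (k+1), ‖u.coeff a‖ * ‖v.coeff (k - a)‖ ^ 2) := step2
        _ ≤ U * ∑ a ∈ range (k+1), ‖u.coeff a‖ * ‖v.coeff (k - a)‖ ^ 2 :=
            mul_le_mul_of_nonneg_right (hU _) hT0
    have swap : ∑ k ∈ range M, ∑ a ∈ range (k+1), ‖u.coeff a‖ * ‖v.coeff (k - a)‖ ^ 2
        ≤ U * S2 v M := by
      have expand : ∀ k ∈ range M,
          ∑ a ∈ range (k+1), ‖u.coeff a‖ * ‖v.coeff (k - a)‖ ^ 2
          = ∑ a ∈ range M, if a ≤ k then ‖u.coeff a‖ * ‖v.coeff (k - a)‖ ^ 2 else 0 := by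
        intro k hk
        rw [← Finset.sum_subset (Finset.range_subset_range.2 (Nat.succ_le_of_lt (mem_range.mp hk)))
          (fun x _ hx => by
            have : ¬ x ≤ k := fun hc => hx (mem_range.2 (Nat.lt_succ_of_le hc))
            simp [this])]
        exact Finset.sum_congr rfl fun a ha => by
          simp [Nat.lt_succ_iff.mp (mem_range.mp ha)]
      have e : ∑ k ∈ range M, ∑ a ∈ range (k+1), ‖u.coeff a‖ * ‖v.coeff (k - a)‖ ^ 2
          = ∑ a ∈ range M, ∑ k ∈ range M,
              if a ≤ k then ‖u.coeff a‖ * ‖v.coeff (k - a)‖ ^ 2 else 0 := by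
        rw [← Finset.sum_comm]
        exact Finset.sum_congr rfl expand
      have inner : ∀ a ∈ range M,
          (∑ k ∈ range M, if a ≤ k then ‖u.coeff a‖ * ‖v.coeff (k - a)‖ ^ 2 else 0)
          ≤ ‖u.coeff a‖ * S2 v M := by
        intro a _
        rw [Finset.sum_ite, Finset.sum_const_zero, add_zero]
        have hfil : (range M).filter (fun k => a ≤ k) = Finset.Ico a M := by
          ext x; simp [Finset.mem_Ico, Finset.mem_filter, Finset.mem_range]; tauto
        rw [hfil, Finset.sum_Ico_eq_sum_range]
        have : ∀ j, ‖u.coeff a‖ * ‖v.coeff (a + j - a)‖ ^ 2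
            = ‖u.coeff a‖ * ‖v.coeff j‖ ^ 2 := by intro j; rw [Nat.add_sub_cancel_left]
        rw [Finset.sum_congr rfl fun j _ => this j, ← Finset.mul_sum]
        refine mul_le_mul_of_nonneg_left ?_ (norm_nonneg _)
        refine Finset.sum_le_sum_of_subset_of_nonneg
          (Finset.range_subset_range.2 (Nat.sub_le _ _)) (fun _ _ _ => sq_nonneg _)
      calc ∑ k ∈ range M, ∑ a ∈ range (k+1), ‖u.coeff a‖ * ‖v.coeff (k - a)‖ ^ 2
          = _ := e
        _ ≤ ∑ a ∈ range M, ‖u.coeff a‖ * S2 v M := Finset.sum_le_sum inner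
        _ = (∑ a ∈ range M, ‖u.coeff a‖) * S2 v M := (Finset.sum_mul _ _ _).symm
        _ ≤ U * S2 v M := mul_le_mul_of_nonneg_right (hU _) (S2_nonneg _ _)
    calc S2 (u*v) M ≤ ∑ k ∈ range M, U * ∑ a ∈ range (k+1), ‖u.coeff a‖ * ‖v.coeff (k - a)‖ ^ 2 :=
          Finset.sum_le_sum fun k _ => hk k
      _ = U * ∑ k ∈ range M, ∑ a ∈ range (k+1), ‖u.coeff a‖ * ‖v.coeff (k - a)‖ ^ 2 :=
          (Finset.mul_sum _ _ _).symm
      _ ≤ U * (U * S2 v M) := mul_le_mul_of_nonneg_left swap hU0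
      _ = U ^ 2 * S2 v M := by ring
  rw [nrm_eq_sqrt_S2 _ hM1, nrm_eq_sqrt_S2 _ hM2]
  calc Real.sqrt (S2 (u*v) M) ≤ Real.sqrt (U ^ 2 * S2 v M) := Real.sqrt_le_sqrt key
    _ = U * Real.sqrt (S2 v M) := by
        rw [Real.sqrt_mul (sq_nonneg U), Real.sqrt_sq hU0]

/-! ### fstar -/

noncomputable def fstar (f : Polynomial ℂ) : Polynomial ℂ :=
  ∑ i ∈ range (f.natDegree + 1), C ((starRingEnd ℂ) (f.coeff (f.natDegree - i))) * X ^ i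

lemma fstar_coeff (f : Polynomial ℂ) (i : ℕ) :
    (fstar f).coeff i
      = if i ≤ f.natDegree then (starRingEnd ℂ) (f.coeff (f.natDegree - i)) else 0 := by
  rw [fstar, Polynomial.finset_sum_coeff]
  have : ∀ k ∈ range (f.natDegree + 1),
      (C ((starRingEnd ℂ) (f.coeff (f.natDegree - k))) * X ^ k).coeff i
      = if i = k then (starRingEnd ℂ) (f.coeff (f.natDegree - k)) else 0 := by
    intro k _
    rw [Polynomial.coeff_C_mul, Polynomial.coeff_X_pow]
    split <;> simp_all
  rw [Finset.sum_congr rfl this, Finset.sum_ite_eq]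
  simp [Nat.lt_succ_iff]

lemma fstar_natDegree_lt (f : Polynomial ℂ) : (fstar f).natDegree < f.natDegree + 1 := by
  refine Nat.lt_succ_of_le ?_
  refine Polynomial.natDegree_sum_le_of_forall_le _ _ ?_
  intro i hi
  refine le_trans (Polynomial.natDegree_C_mul_le _ _) ?_
  simp only [Polynomial.natDegree_X_pow]
  exact Nat.lt_succ_iff.mp (Finset.mem_range.mp hi)

lemma fstar_eval (f : Polynomial ℂ) {z : ℂ} (hz : z ≠ 0) :
    (fstar f).eval z = (starRingEnd ℂ)
      (((starRingEnd ℂ) z) ^ f.natDegree * f.eval (((starRingEnd ℂ) z)⁻¹)) := by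
  set d := f.natDegree with hd
  have hzc : (starRingEnd ℂ) z ≠ 0 := by simpa using hz
  have lhs : (fstar f).eval z = ∑ i ∈ range (d+1), (starRingEnd ℂ) (f.coeff (d - i)) * z ^ i := by
    rw [fstar, Polynomial.eval_finset_sum]
    exact Finset.sum_congr rfl fun i _ => by simp [← hd]
  have refl : ∑ i ∈ range (d+1), (starRingEnd ℂ) (f.coeff (d - i)) * z ^ i
      = ∑ i ∈ range (d+1), (starRingEnd ℂ) (f.coeff i) * z ^ (d - i) := by
    have := Finset.sum_range_reflect
      (fun i => (starRingEnd ℂ) (f.coeff (d - i)) * z ^ i) (d + 1)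
    rw [← this]
    refine Finset.sum_congr rfl fun i hi => ?_
    have hi' : i ≤ d := Nat.lt_succ_iff.mp (Finset.mem_range.mp hi)
    have h1 : d + 1 - 1 - i = d - i := by omega
    have h2 : d - (d - i) = i := by omega
    rw [h1, h2]
  have rhs : (starRingEnd ℂ) (((starRingEnd ℂ) z) ^ d * f.eval (((starRingEnd ℂ) z)⁻¹))
      = ∑ i ∈ range (d+1), (starRingEnd ℂ) (f.coeff i) * z ^ (d - i) := by
    rw [Polynomial.eval_eq_sum_range' (show f.natDegree < d + 1 by omega)]
    rw [Finset.mul_sum, map_sum]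
    refine Finset.sum_congr rfl fun i hi => ?_
    have hi' : i ≤ d := Nat.lt_succ_iff.mp (Finset.mem_range.mp hi)
    rw [map_mul, map_pow, Complex.conj_conj, map_mul, map_pow, map_inv₀, Complex.conj_conj,
      inv_pow, pow_sub₀ z hz hi']
    ring
  rw [lhs, refl, rhs]

lemma fstar_eval_zero_ne (f : Polynomial ℂ) (hf : f ≠ 0) : (fstar f).eval 0 ≠ 0 := by
  rw [← Polynomial.coeff_zero_eq_eval_zero, fstar_coeff]
  simp only [Nat.zero_le, if_true, Nat.sub_zero]
  rw [Polynomial.coeff_natDegree]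
  simpa using Polynomial.leadingCoeff_ne_zero.mpr hf

lemma fstar_root (f : Polynomial ℂ) (hf : f ≠ 0) {z : ℂ} (hz : (fstar f).eval z = 0) :
    z ≠ 0 ∧ f.IsRoot (((starRingEnd ℂ) z)⁻¹) := by
  have hz0 : z ≠ 0 := by
    intro h; subst h; exact fstar_eval_zero_ne f hf hz
  refine ⟨hz0, ?_⟩
  rw [fstar_eval f hz0] at hz
  have := (map_eq_zero_iff _ (RingHom.injective _)).mp hz
  rcases mul_eq_zero.mp this with h | h
  · exact absurd (pow_eq_zero_iff'.mp h).1 (by simpa using hz0)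
  · exact h

/-! ### the competitor building blocks -/

noncomputable def Sm (m : ℕ) (z : ℂ) : ℝ := ∑ k ∈ range (m+2), Complex.normSq z ^ k

noncomputable def gm (m : ℕ) (z : ℂ) : Polynomial ℂ :=
  ∑ k ∈ range (m+2), C (((starRingEnd ℂ) z) ^ k / (Sm m z : ℂ)) * X ^ k

lemma normSq_one_le {z : ℂ} (hz : 1 ≤ ‖z‖) : 1 ≤ Complex.normSq z := by
  rw [Complex.normSq_eq_norm_sq]
  nlinarith

lemma Sm_ge {m : ℕ} {z : ℂ} (hz : 1 ≤ ‖z‖) : (m + 2 : ℝ) ≤ Sm m z := by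
  have : ∀ k ∈ range (m+2), (1:ℝ) ≤ Complex.normSq z ^ k :=
    fun k _ => one_le_pow₀ (normSq_one_le hz)
  have h := Finset.card_nsmul_le_sum (range (m+2)) (fun k => Complex.normSq z ^ k) 1 this
  simpa [Sm] using h

lemma Sm_pos {m : ℕ} {z : ℂ} (hz : 1 ≤ ‖z‖) : 0 < Sm m z :=
  lt_of_lt_of_le (by positivity) (Sm_ge hz)

lemma gm_coeff (m : ℕ) (z : ℂ) (j : ℕ) :
    (gm m z).coeff j
      = if j < m + 2 then ((starRingEnd ℂ) z) ^ j / (Sm m z : ℂ) else 0 := by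
  rw [gm, Polynomial.finset_sum_coeff]
  have : ∀ k ∈ range (m+2),
      (C (((starRingEnd ℂ) z) ^ k / (Sm m z : ℂ)) * X ^ k).coeff j
      = if j = k then ((starRingEnd ℂ) z) ^ k / (Sm m z : ℂ) else 0 := by
    intro k _
    rw [Polynomial.coeff_C_mul, Polynomial.coeff_X_pow]
    split <;> simp_all
  rw [Finset.sum_congr rfl this, Finset.sum_ite_eq]
  simp

lemma gm_natDegree_lt (m : ℕ) (z : ℂ) : (gm m z).natDegree < m + 2 := by
  refine Nat.lt_succ_of_le ?_
  refine Polynomial.natDegree_sum_le_of_forall_le _ _ ?_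
  intro i hi
  refine le_trans (Polynomial.natDegree_C_mul_le _ _) ?_
  simp only [Polynomial.natDegree_X_pow]
  exact Nat.lt_succ_iff.mp (Finset.mem_range.mp hi)

lemma gm_eval_self {m : ℕ} {z : ℂ} (hz : 1 ≤ ‖z‖) : (gm m z).eval z = 1 := by
  have hS : (Sm m z : ℝ) ≠ 0 := ne_of_gt (Sm_pos hz)
  have hSc : ((Sm m z : ℝ) : ℂ) ≠ 0 := by simpa using hS
  rw [gm, Polynomial.eval_finset_sum]
  have : ∀ k ∈ range (m+2),
      Polynomial.eval z (C (((starRingEnd ℂ) z) ^ k / (Sm m z : ℂ)) * X ^ k)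
      = ((Complex.normSq z : ℝ) : ℂ) ^ k / (Sm m z : ℂ) := by
    intro k _
    simp only [Polynomial.eval_mul, Polynomial.eval_C, Polynomial.eval_pow, Polynomial.eval_X]
    rw [div_mul_eq_mul_div, ← mul_pow]
    congr 2
    rw [mul_comm]
    exact Complex.mul_conj z
  rw [Finset.sum_congr rfl this, ← Finset.sum_div]
  rw [div_eq_one_iff_eq hSc]
  rw [Sm]
  push_cast
  rfl

lemma gm_coeff_norm {m : ℕ} {z : ℂ} (hz : 1 ≤ ‖z‖) (j : ℕ) (hj : j < m + 2) :
    ‖(gm m z).coeff j‖ = ‖z‖ ^ j / Sm m z := by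
  rw [gm_coeff, if_pos hj, norm_div, norm_pow]
  congr 1
  · rw [RingHomIsometric.norm_map]
  · rw [Complex.norm_real, Real.norm_of_nonneg (le_of_lt (Sm_pos hz))]

lemma gm_nrm_le {m : ℕ} {z : ℂ} (hz : 1 ≤ ‖z‖) :
    nrm (gm m z) ≤ Real.sqrt (1 / (m + 2)) := by
  have hS := Sm_pos (m := m) hz
  rw [nrm_eq_sqrt_S2 _ (gm_natDegree_lt m z)]
  refine Real.sqrt_le_sqrt ?_
  have : S2 (gm m z) (m+2) = Sm m z / (Sm m z)^2 := by
    rw [S2, Sm, Finset.sum_div]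
    refine Finset.sum_congr rfl fun k hk => ?_
    rw [gm_coeff_norm hz k (Finset.mem_range.mp hk), div_pow]
    congr 1
    rw [← pow_mul, mul_comm k 2, pow_mul]
    congr 1
    rw [Complex.normSq_eq_norm_sq]
  rw [this, sq, div_mul_eq_div_div, div_self (ne_of_gt hS)]
  exact one_div_le_one_div_of_le (by positivity) (Sm_ge hz)

lemma gm_l1_le {m : ℕ} {z : ℂ} (hz : 1 ≤ ‖z‖) :
    ∑ a ∈ range (m+2), ‖(gm m z).coeff a‖ ≤ 1 := by
  have hS := Sm_pos (m := m) hz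
  have : ∀ a ∈ range (m+2), ‖(gm m z).coeff a‖ ≤ Complex.normSq z ^ a / Sm m z := by
    intro a ha
    rw [gm_coeff_norm hz a (Finset.mem_range.mp ha)]
    have hb : ‖z‖ ≤ Complex.normSq z := by
      rw [Complex.normSq_eq_norm_sq]; nlinarith
    gcongr
  refine le_trans (Finset.sum_le_sum this) ?_
  rw [← Finset.sum_div, ← Sm, div_self (ne_of_gt hS)]

lemma one_sub_gm_l1 {m : ℕ} {z : ℂ} (hz : 1 ≤ ‖z‖) (s : Finset ℕ) :
    ∑ a ∈ s, ‖(1 - gm m z).coeff a‖ ≤ 2 := by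
  have h1 : ∀ a, ‖(1 - gm m z).coeff a‖ ≤ ‖(1 : Polynomial ℂ).coeff a‖ + ‖(gm m z).coeff a‖ := by
    intro a; rw [Polynomial.coeff_sub]; exact norm_sub_le _ _
  calc ∑ a ∈ s, ‖(1 - gm m z).coeff a‖
      ≤ ∑ a ∈ s, (‖(1 : Polynomial ℂ).coeff a‖ + ‖(gm m z).coeff a‖) :=
        Finset.sum_le_sum fun a _ => h1 a
    _ = ∑ a ∈ s, ‖(1 : Polynomial ℂ).coeff a‖ + ∑ a ∈ s, ‖(gm m z).coeff a‖ :=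
        Finset.sum_add_distrib
    _ ≤ 1 + 1 := by
        refine add_le_add ?_ ?_
        · have : ∀ a ∈ s, ‖(1 : Polynomial ℂ).coeff a‖ = if a = 0 then 1 else 0 := by
            intro a _; rw [Polynomial.coeff_one]; split <;> simp
          rw [Finset.sum_congr rfl this, Finset.sum_ite_eq' s 0 (fun _ => (1:ℝ))]
          split <;> norm_num
        · exact sum_norm_coeff_le (gm_natDegree_lt m z) (gm_l1_le hz) s
    _ = 2 := by norm_num

lemma nrm_zero : nrm (0 : Polynomial ℂ) = 0 := by
  rw [nrm_eq_sqrt_S2 (0 : Polynomial ℂ) (M := 1) (by simp)]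
  simp [S2]

lemma telescope (m : ℕ) (R : Multiset ℂ) (hR : ∀ z ∈ R, 1 ≤ ‖z‖) :
    nrm (1 - (R.map (fun z => 1 - gm m z)).prod)
      ≤ (R.card * 2 ^ R.card : ℝ) * Real.sqrt (1 / (m + 2)) := by
  induction R using Multiset.induction_on with
  | empty => simp [nrm_zero]
  | cons a R ih =>
    have ha : 1 ≤ ‖a‖ := hR a (Multiset.mem_cons_self a R)
    have hR' : ∀ z ∈ R, 1 ≤ ‖z‖ := fun z hzz => hR z (Multiset.mem_cons_of_mem hzz)
    set W := (R.map (fun z => 1 - gm m z)).prod with hW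
    have hprod : ((a ::ₘ R).map (fun z => 1 - gm m z)).prod = (1 - gm m a) * W := by
      rw [Multiset.map_cons, Multiset.prod_cons]
    have hident : 1 - (1 - gm m a) * W = gm m a + (1 - gm m a) * (1 - W) := by ring
    rw [hprod, hident]
    have h1 : nrm (gm m a + (1 - gm m a) * (1 - W))
        ≤ nrm (gm m a) + nrm ((1 - gm m a) * (1 - W)) := nrm_add_le _ _
    have h2 : nrm ((1 - gm m a) * (1 - W)) ≤ 2 * nrm (1 - W) :=
      nrm_mul_le _ _ (one_sub_gm_l1 ha)
    have h3 := ih hR'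
    have hsq : (0:ℝ) ≤ Real.sqrt (1 / (m + 2)) := Real.sqrt_nonneg _
    have hcard : ((a ::ₘ R).card : ℝ) = (R.card : ℝ) + 1 := by
      rw [Multiset.card_cons]; push_cast; ring
    refine le_trans h1 (le_trans (add_le_add (gm_nrm_le ha) h2) ?_)
    rw [hcard]
    have h4 : 2 * nrm (1 - W) ≤ 2 * ((R.card * 2 ^ R.card : ℝ) * Real.sqrt (1 / (m + 2))) := by
      nlinarith
    refine le_trans (add_le_add_right h4 _) ?_
    have hc : (0:ℝ) ≤ (R.card : ℝ) := Nat.cast_nonneg _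
    have hpow : (1:ℝ) ≤ 2 ^ R.card := one_le_pow₀ (by norm_num)
    have key : (1 : ℝ) + 2 * ((R.card * 2 ^ R.card : ℝ)) ≤ ((R.card : ℝ) + 1) * 2 ^ (R.card + 1) := by
      rw [pow_succ]
      nlinarith
    rw [Multiset.card_cons]
    nlinarith [mul_le_mul_of_nonneg_right key hsq]

-- pointwise expansion
lemma norm_sub_mul_sq (a b t : ℂ) :
    ‖a - t * b‖ ^ 2
      = ‖a‖ ^ 2 - 2 * ((starRingEnd ℂ) t * (a * (starRingEnd ℂ) b)).re
        + ‖t‖ ^ 2 * ‖b‖ ^ 2 := by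
  have hn : ∀ w : ℂ, ‖w‖ ^ 2 = Complex.normSq w := by
    intro w; rw [Complex.sq_norm]
  rw [hn, hn, hn, hn, Complex.normSq_sub, Complex.normSq_mul]
  have : a * (starRingEnd ℂ) (t * b) = (starRingEnd ℂ) t * (a * (starRingEnd ℂ) b) := by
    rw [map_mul]; ring
  rw [this]
  ring

lemma ortho_coeff (f : Polynomial ℂ) (n : ℕ) (pn : Polynomial ℂ)
    (hopt : ∀ q : Polynomial ℂ, q.natDegree ≤ n →
      hardyNormSq (1 - pn * f) ≤ hardyNormSq (1 - q * f))
    (hpd : pn.natDegree ≤ n)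
    (j : ℕ) (hj : j ≤ n) :
    ((1 - pn * f) * fstar f).coeff (f.natDegree + j) = 0 := by
  set d := f.natDegree with hd
  set g : Polynomial ℂ := 1 - pn * f with hg
  set u : Polynomial ℂ := f * X ^ j with hu
  set M := n + d + 1 with hM
  have hgdeg : g.natDegree < M := by
    have h1 : (pn * f).natDegree ≤ n + d := le_trans Polynomial.natDegree_mul_le (by omega)
    have h2 := Polynomial.natDegree_sub_le (1 : Polynomial ℂ) (pn * f)
    simp only [Polynomial.natDegree_one] at h2
    have h3 : (0:ℕ) ⊔ (pn * f).natDegree = (pn * f).natDegree := by simp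
    rw [h3] at h2
    rw [← hg] at h2
    omega
  have hudeg : u.natDegree < M := by
    have h1 : u.natDegree ≤ d + j := by
      refine le_trans Polynomial.natDegree_mul_le ?_
      simp [Polynomial.natDegree_X_pow, hd]
    omega
  -- minimality in S2 form
  have key : ∀ t : ℂ, S2 g M ≤ S2 (g - C t * u) M := by
    intro t
    have hqdeg : (pn + C t * X ^ j).natDegree ≤ n := by
      refine le_trans (Polynomial.natDegree_add_le _ _) ?_
      have : (C t * X ^ j).natDegree ≤ j :=
        le_trans (Polynomial.natDegree_C_mul_le _ _) (by simp [Polynomial.natDegree_X_pow])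
      simp only [sup_le_iff]
      exact ⟨hpd, le_trans this hj⟩
    have hrw : 1 - (pn + C t * X ^ j) * f = g - C t * u := by rw [hg, hu]; ring
    have h2 : (g - C t * u).natDegree < M := by
      rw [← hrw]
      have h1 : ((pn + C t * X ^ j) * f).natDegree ≤ n + d := by
        refine le_trans Polynomial.natDegree_mul_le ?_
        have := hqdeg
        omega
      have h2' := Polynomial.natDegree_sub_le (1 : Polynomial ℂ) ((pn + C t * X ^ j) * f)
      simp only [Polynomial.natDegree_one] at h2'
      have h3 : (0:ℕ) ⊔ ((pn + C t * X ^ j) * f).natDegree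
          = ((pn + C t * X ^ j) * f).natDegree := by simp
      rw [h3] at h2'
      omega
    have := hopt (pn + C t * X ^ j) hqdeg
    rwa [hardyNormSq_eq_S2 _ hgdeg, hrw, hardyNormSq_eq_S2 _ h2] at this
  -- expansion
  set c : ℂ := ∑ k ∈ range M, g.coeff k * (starRingEnd ℂ) (u.coeff k) with hc
  have expand : ∀ t : ℂ, S2 (g - C t * u) M
      = S2 g M - 2 * ((starRingEnd ℂ) t * c).re + ‖t‖ ^ 2 * S2 u M := by
    intro t
    have hterm : ∀ k, ‖(g - C t * u).coeff k‖ ^ 2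
        = ‖g.coeff k‖ ^ 2
          - 2 * ((starRingEnd ℂ) t * (g.coeff k * (starRingEnd ℂ) (u.coeff k))).re
          + ‖t‖ ^ 2 * ‖u.coeff k‖ ^ 2 := by
      intro k
      rw [Polynomial.coeff_sub, Polynomial.coeff_C_mul]
      exact norm_sub_mul_sq _ _ _
    rw [S2, Finset.sum_congr rfl fun k _ => hterm k]
    rw [Finset.sum_add_distrib, Finset.sum_sub_distrib, ← Finset.mul_sum, ← Finset.mul_sum]
    congr 2
    rw [← Complex.re_sum, ← Finset.mul_sum, hc]
  -- conclude c = 0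
  have hc0 : c = 0 := by
    by_contra hne
    set s : ℝ := 1 / (S2 u M + 1) with hs
    have hSu : 0 ≤ S2 u M := S2_nonneg u M
    have hspos : 0 < s := by positivity
    have h := key ((s : ℂ) * c)
    rw [expand] at h
    have h1 : (starRingEnd ℂ) ((s:ℂ) * c) * c = (s:ℂ) * ((starRingEnd ℂ) c * c) := by
      rw [map_mul]
      have : (starRingEnd ℂ) ((s:ℂ)) = (s:ℂ) := Complex.conj_ofReal s
      rw [this]; ring
    have h2 : ((starRingEnd ℂ) ((s:ℂ) * c) * c).re = s * Complex.normSq c := by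
      rw [h1]
      have : (starRingEnd ℂ) c * c = (Complex.normSq c : ℂ) := by
        rw [mul_comm]; exact Complex.mul_conj c
      rw [this, ← Complex.ofReal_mul]
      exact Complex.ofReal_re _
    have h3 : ‖(s:ℂ) * c‖ ^ 2 = s ^ 2 * Complex.normSq c := by
      rw [norm_mul, mul_pow, Complex.norm_real, Real.norm_of_nonneg (le_of_lt hspos)]
      rw [Complex.sq_norm]
    rw [h2, h3] at h
    have hnc : 0 < Complex.normSq c := by
      rcases lt_or_eq_of_le (Complex.normSq_nonneg c) with h' | h'
      · exact h'
      · exact absurd (Complex.normSq_eq_zero.mp h'.symm) hne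
    have hlt : s * S2 u M < 1 := by
      rw [hs, div_mul_eq_mul_div, one_mul, div_lt_one (by positivity)]
      linarith
    have h5 : s ^ 2 * Complex.normSq c * S2 u M = (s * Complex.normSq c) * (s * S2 u M) := by
      ring
    have h6 : (s * Complex.normSq c) * (s * S2 u M) < (s * Complex.normSq c) * 1 :=
      mul_lt_mul_of_pos_left hlt (mul_pos hspos hnc)
    rw [h5] at h
    nlinarith [mul_pos hspos hnc]
  -- bridge: the coefficient equals c
  have hucoeff : ∀ k, u.coeff k = if j ≤ k then f.coeff (k - j) else 0 := by
    intro k; rw [hu, Polynomial.coeff_mul_X_pow']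
  have lhs_eq : ((1 - pn * f) * fstar f).coeff (d + j)
      = ∑ k ∈ range (d + j + 1), (if j ≤ k then g.coeff k * (starRingEnd ℂ) (f.coeff (k - j)) else 0) := by
    rw [← hg, coeff_mul_range]
    refine Finset.sum_congr rfl fun k hk => ?_
    have hk' : k ≤ d + j := Nat.lt_succ_iff.mp (Finset.mem_range.mp hk)
    rw [fstar_coeff]
    rcases le_or_gt j k with h | h
    · have h1 : d + j - k ≤ d := by omega
      have h2 : d - (d + j - k) = k - j := by omega
      rw [if_pos h1, if_pos h, h2]
    · have h1 : ¬ (d + j - k ≤ d) := by omega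
      rw [if_neg h1, if_neg (not_le.mpr h), mul_zero]
  have c_eq : c = ∑ k ∈ range (d + j + 1),
      (if j ≤ k then g.coeff k * (starRingEnd ℂ) (f.coeff (k - j)) else 0) := by
    have hterm : ∀ k, g.coeff k * (starRingEnd ℂ) (u.coeff k)
        = (if j ≤ k then g.coeff k * (starRingEnd ℂ) (f.coeff (k - j)) else 0) := by
      intro k; rw [hucoeff]; split <;> simp
    have hsub : range (d + j + 1) ⊆ range M :=
      Finset.range_subset_range.2 (by omega)
    rw [hc, Finset.sum_congr rfl (fun k _ => hterm k)]
    refine (Finset.sum_subset hsub ?_).symm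
    intro k _ hk
    have hk2 : d + j + 1 ≤ k := le_of_not_gt (fun hcon => hk (Finset.mem_range.2 hcon))
    have hz : f.coeff (k - j) = 0 := by
      refine Polynomial.coeff_eq_zero_of_natDegree_lt ?_
      omega
    rw [hz]
    split <;> simp
  rw [lhs_eq, ← c_eq, hc0]

lemma inner_bound (g : Polynomial ℂ) {r : ℝ} (hr0 : 0 ≤ r) (hr1 : r < 1) {z : ℂ}
    (hz : ‖z‖ ≤ r) : ‖g.eval z‖ ≤ Real.sqrt (1 / (1 - r ^ 2)) * nrm g := by
  set M := g.natDegree + 1 with hMdef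
  have hM : g.natDegree < M := Nat.lt_succ_self _
  have h1 : ‖g.eval z‖ ≤ ∑ k ∈ range M, ‖g.coeff k‖ * ‖z‖ ^ k := by
    rw [Polynomial.eval_eq_sum_range' hM]
    refine le_trans (norm_sum_le _ _) (le_of_eq (Finset.sum_congr rfl fun k _ => ?_))
    rw [norm_mul, norm_pow]
  have hgeom : ∑ k ∈ range M, (‖z‖ ^ k) ^ 2 ≤ 1 / (1 - r ^ 2) := by
    have hb : ∀ k ∈ range M, (‖z‖ ^ k) ^ 2 ≤ (r ^ 2) ^ k := by
      intro k _
      rw [← pow_mul, mul_comm k 2, pow_mul]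
      exact pow_le_pow_left₀ (sq_nonneg _)
        (by nlinarith [norm_nonneg z] : ‖z‖ ^ 2 ≤ r ^ 2) k
    refine le_trans (Finset.sum_le_sum hb) ?_
    have hx0 : (0:ℝ) ≤ r ^ 2 := sq_nonneg r
    have hx1 : r ^ 2 < 1 := by nlinarith
    have hpos : 0 < 1 - r ^ 2 := by linarith
    rw [le_div_iff₀ hpos]
    have hgs := geom_sum_mul (r ^ 2) M
    have hM0 : (0:ℝ) ≤ (r ^ 2) ^ M := pow_nonneg hx0 M
    nlinarith [hgs]
  have hcs := Finset.sum_mul_sq_le_sq_mul_sq (range M) (fun k => ‖g.coeff k‖)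
    (fun k => ‖z‖ ^ k)
  have hA0 : 0 ≤ ∑ k ∈ range M, ‖g.coeff k‖ * ‖z‖ ^ k :=
    Finset.sum_nonneg fun k _ => mul_nonneg (norm_nonneg _) (pow_nonneg (norm_nonneg _) _)
  calc ‖g.eval z‖ ≤ ∑ k ∈ range M, ‖g.coeff k‖ * ‖z‖ ^ k := h1
    _ = Real.sqrt ((∑ k ∈ range M, ‖g.coeff k‖ * ‖z‖ ^ k) ^ 2) := (Real.sqrt_sq hA0).symm
    _ ≤ Real.sqrt (S2 g M * (1 / (1 - r ^ 2))) := by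
        refine Real.sqrt_le_sqrt (le_trans hcs ?_)
        exact mul_le_mul_of_nonneg_left hgeom (S2_nonneg g M)
    _ = Real.sqrt (1 / (1 - r ^ 2)) * nrm g := by
        have hpos : (0:ℝ) < 1 - r ^ 2 := by nlinarith
        rw [mul_comm (S2 g M), Real.sqrt_mul (by positivity), nrm_eq_sqrt_S2 g hM]

theorem stmt8
    (f : Polynomial ℂ) (hf0 : f.eval 0 ≠ 0)
    (hsimple : ∀ z : ℂ, Polynomial.rootMultiplicity z f ≤ 1)
    (hroots : ∀ z : ℂ, f.IsRoot z → 1 ≤ ‖z‖)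
    (p : ℕ → Polynomial ℂ) (hpdeg : ∀ n, (p n).natDegree ≤ n)
    (hpopt : ∀ n, ∀ q : Polynomial ℂ, q.natDegree ≤ n →
      hardyNormSq (1 - p n * f) ≤ hardyNormSq (1 - q * f))
    (K : Set ℂ) (hK : IsCompact K) (hKsub : K ⊆ Metric.closedBall (0 : ℂ) 1)
    (hKf : ∀ z ∈ K, ¬ f.IsRoot z) :
    TendstoUniformlyOn (fun n z => 1 - (p n).eval z * f.eval z)
      (fun _ => (0 : ℂ)) Filter.atTop K := by
  classical
  have hf : f ≠ 0 := fun h => hf0 (by simp [h])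
  set d := f.natDegree with hd
  set G : ℕ → Polynomial ℂ := fun n => 1 - p n * f with hG
  have hGdeg : ∀ n, (G n).natDegree ≤ n + d := by
    intro n
    have h1 : (p n * f).natDegree ≤ n + d :=
      le_trans Polynomial.natDegree_mul_le (add_le_add_left (hpdeg n) d)
    have h2 := Polynomial.natDegree_sub_le (1 : Polynomial ℂ) (p n * f)
    simp only [Polynomial.natDegree_one] at h2
    have h3 : (0:ℕ) ⊔ (p n * f).natDegree = (p n * f).natDegree := by simp
    rw [h3] at h2
    exact le_trans h2 h1
  have hvanish : ∀ n k, d ≤ k → k ≤ d + n → (G n * fstar f).coeff k = 0 := by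
    intro n k h1 h2
    have h := ortho_coeff f n (p n) (hpopt n) (hpdeg n) (k - d) (by omega)
    rw [← hd] at h
    rwa [(by omega : d + (k - d) = k)] at h
  -- ℓ¹ bound for fstar
  set Fl1 : ℝ := ∑ i ∈ range (d + 1), ‖(fstar f).coeff i‖ with hFl1def
  have hFl1nonneg : 0 ≤ Fl1 := Finset.sum_nonneg fun _ _ => norm_nonneg _
  have hFl1 : ∀ s : Finset ℕ, ∑ b ∈ s, ‖(fstar f).coeff b‖ ≤ Fl1 := by
    intro s
    refine sum_norm_coeff_le ?_ le_rfl s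
    rw [hd]; exact fstar_natDegree_lt f
  -- radius r
  set s0 : Finset ℂ := f.roots.toFinset.filter (fun z => 1 < ‖z‖) with hs0
  set ρ : NNReal := s0.sup (fun z => ‖z‖₊⁻¹) with hρ
  have hρ1 : (ρ : ℝ) < 1 := by
    have : ρ < 1 := by
      rw [hρ]
      refine Finset.sup_lt_iff (by norm_num) |>.mpr ?_
      intro z hz
      have h1 : 1 < ‖z‖ := (Finset.mem_filter.mp hz).2
      have h2 : (1:NNReal) < ‖z‖₊ := by
        rw [← NNReal.coe_lt_coe]
        simpa using h1
      exact inv_lt_one_of_one_lt₀ h2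
    exact_mod_cast this
  set r : ℝ := (1 + ρ) / 2 with hr
  have hρ0 : (0:ℝ) ≤ (ρ : ℝ) := ρ.coe_nonneg
  have hr0 : 0 < r := by rw [hr]; linarith
  have hr1 : r < 1 := by rw [hr]; linarith
  have hρr : (ρ : ℝ) < r := by rw [hr]; linarith
  -- fstar does not vanish on the outer part of K
  have hno : ∀ z ∈ K, r ≤ ‖z‖ → (fstar f).eval z ≠ 0 := by
    intro z hzK hzr h0
    obtain ⟨hz0, hroot⟩ := fstar_root f hf h0
    set v : ℂ := ((starRingEnd ℂ) z)⁻¹ with hv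
    have hv1 : 1 ≤ ‖v‖ := hroots v hroot
    have hvz : ‖v‖ = ‖z‖⁻¹ := by
      rw [hv, norm_inv]
      congr 1
      exact RingHomIsometric.norm_map
    have hzn0 : ‖z‖ ≠ 0 := norm_ne_zero_iff.mpr hz0
    rcases eq_or_lt_of_le hv1 with heq | hlt
    · -- boundary root
      have hz1 : ‖z‖ = 1 := by
        rw [hvz] at heq
        have h' : ‖z‖⁻¹ = 1 := heq.symm
        rwa [inv_eq_one] at h'
      have hnsq : (starRingEnd ℂ) z * z = 1 := by
        rw [mul_comm, Complex.mul_conj]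
        norm_cast
        rw [Complex.normSq_eq_norm_sq, hz1]
        norm_num
      have hvez : v = z := by rw [hv, inv_eq_of_mul_eq_one_right hnsq]
      exact hKf z hzK (hvez ▸ hroot)
    · -- root strictly outside: contradiction with radius
      have hvroots : v ∈ f.roots := Polynomial.mem_roots'.mpr ⟨hf, hroot⟩
      have hvs0 : v ∈ s0 := by
        rw [hs0]
        exact Finset.mem_filter.mpr ⟨Multiset.mem_toFinset.mpr hvroots, hlt⟩
      have hle : ‖v‖₊⁻¹ ≤ ρ := by
        rw [hρ]
        exact Finset.le_sup (f := fun w : ℂ => ‖w‖₊⁻¹) hvs0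
      have hle' : (‖v‖₊⁻¹ : ℝ) ≤ (ρ : ℝ) := NNReal.coe_le_coe.mpr hle
      have hcalc : (‖v‖₊⁻¹ : ℝ) = ‖z‖ := by
        push_cast
        rw [hvz, inv_inv]
      rw [hcalc] at hle'
      linarith
  -- lower bound for fstar on outer K
  obtain ⟨c, hcpos, hcl⟩ : ∃ c : ℝ, 0 < c ∧ ∀ z ∈ K, r ≤ ‖z‖ → c ≤ ‖(fstar f).eval z‖ := by
    set Ko : Set ℂ := K ∩ {z : ℂ | r ≤ ‖z‖} with hKo
    have hKoc : IsCompact Ko := hK.inter_right (isClosed_le continuous_const continuous_norm)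
    rcases Ko.eq_empty_or_nonempty with he | hne
    · refine ⟨1, one_pos, fun z hz hzr => absurd ?_ (by simp [he] : z ∉ Ko)⟩
      exact ⟨hz, hzr⟩
    · obtain ⟨z₀, hz₀, hmin⟩ := hKoc.exists_isMinOn hne
        ((fstar f).continuous.norm.continuousOn)
      refine ⟨‖(fstar f).eval z₀‖, norm_pos_iff.mpr (hno z₀ hz₀.1 hz₀.2), ?_⟩
      intro z hzK hzr
      exact isMinOn_iff.mp hmin z ⟨hzK, hzr⟩
  -- the uniform pointwise bound
  set CB : ℝ := Real.sqrt (1 / (1 - r ^ 2)) with hCB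
  set CO : ℝ := (2 * d * Fl1) / c with hCO
  set CC : ℝ := max CB CO with hCC
  have hCB0 : 0 ≤ CB := Real.sqrt_nonneg _
  have hCC0 : 0 ≤ CC := le_trans hCB0 (le_max_left _ _)
  have hpt : ∀ n, ∀ z ∈ K, ‖(G n).eval z‖ ≤ CC * nrm (G n) := by
    intro n z hzK
    have hz1 : ‖z‖ ≤ 1 := by
      have := hKsub hzK
      rwa [Metric.mem_closedBall, dist_zero_right] at this
    rcases le_or_gt ‖z‖ r with hin | hout
    · refine le_trans (inner_bound (G n) (le_of_lt hr0) hr1 hin) ?_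
      exact mul_le_mul_of_nonneg_right (le_max_left _ _) (nrm_nonneg _)
    · -- outer bound
      have hcz := hcl z hzK (le_of_lt hout)
      have hpdeg2 : (G n * fstar f).natDegree < n + 2 * d + 1 := by
        have h1 : (G n * fstar f).natDegree ≤ (G n).natDegree + (fstar f).natDegree :=
          Polynomial.natDegree_mul_le
        have h2 := hGdeg n
        have h3 : (fstar f).natDegree < d + 1 := by rw [hd]; exact fstar_natDegree_lt f
        omega
      have heval : ‖(G n * fstar f).eval z‖
          ≤ ∑ k ∈ range (n + 2 * d + 1), ‖(G n * fstar f).coeff k‖ * ‖z‖ ^ k := by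
        rw [Polynomial.eval_eq_sum_range' hpdeg2]
        refine le_trans (norm_sum_le _ _) (le_of_eq (Finset.sum_congr rfl fun k _ => ?_))
        rw [norm_mul, norm_pow]
      have hterm : ∀ k, ‖(G n * fstar f).coeff k‖ * ‖z‖ ^ k ≤ Fl1 * nrm (G n) := by
        intro k
        have h1 : ‖(G n * fstar f).coeff k‖ ≤ Fl1 * nrm (G n) :=
          norm_coeff_mul_le (G n) (fstar f) hFl1 k
        have h2 : ‖z‖ ^ k ≤ 1 := pow_le_one₀ (norm_nonneg _) hz1
        calc ‖(G n * fstar f).coeff k‖ * ‖z‖ ^ k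
            ≤ ‖(G n * fstar f).coeff k‖ * 1 :=
              mul_le_mul_of_nonneg_left h2 (norm_nonneg _)
          _ = ‖(G n * fstar f).coeff k‖ := mul_one _
          _ ≤ Fl1 * nrm (G n) := h1
      have hsplit : ∑ k ∈ range (n + 2 * d + 1), ‖(G n * fstar f).coeff k‖ * ‖z‖ ^ k
          ≤ 2 * d * (Fl1 * nrm (G n)) := by
        rw [Finset.range_eq_Ico]
        rw [← Finset.sum_Ico_consecutive _ (by omega : 0 ≤ d) (by omega : d ≤ n + 2 * d + 1)]
        rw [← Finset.sum_Ico_consecutive _ (by omega : d ≤ n + d + 1)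
          (by omega : n + d + 1 ≤ n + 2 * d + 1)]
        have hmid : ∑ k ∈ Finset.Ico d (n + d + 1), ‖(G n * fstar f).coeff k‖ * ‖z‖ ^ k = 0 := by
          refine Finset.sum_eq_zero fun k hk => ?_
          have hk' := Finset.mem_Ico.mp hk
          rw [hvanish n k hk'.1 (by omega)]
          simp
        rw [hmid, zero_add]
        have hB0 : 0 ≤ Fl1 * nrm (G n) := mul_nonneg hFl1nonneg (nrm_nonneg _)
        have h1 : ∑ k ∈ Finset.Ico 0 d, ‖(G n * fstar f).coeff k‖ * ‖z‖ ^ k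
            ≤ d * (Fl1 * nrm (G n)) := by
          refine le_trans (Finset.sum_le_card_nsmul _ _ _ fun k _ => hterm k) ?_
          rw [Nat.card_Ico, nsmul_eq_mul]
          have hdd : d - 0 = d := by omega
          rw [hdd]
        have h2 : ∑ k ∈ Finset.Ico (n + d + 1) (n + 2 * d + 1),
            ‖(G n * fstar f).coeff k‖ * ‖z‖ ^ k ≤ d * (Fl1 * nrm (G n)) := by
          refine le_trans (Finset.sum_le_card_nsmul _ _ _ fun k _ => hterm k) ?_
          rw [Nat.card_Ico, nsmul_eq_mul]
          have : n + 2 * d + 1 - (n + d + 1) = d := by omega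
          rw [this]
        linarith
      have hGz : ‖(G n).eval z‖ * c ≤ 2 * d * (Fl1 * nrm (G n)) := by
        have h1 : ‖(G n).eval z‖ * c ≤ ‖(G n).eval z‖ * ‖(fstar f).eval z‖ :=
          mul_le_mul_of_nonneg_left hcz (norm_nonneg _)
        have h2 : ‖(G n).eval z‖ * ‖(fstar f).eval z‖ = ‖(G n * fstar f).eval z‖ := by
          rw [Polynomial.eval_mul, norm_mul]
        linarith [le_trans heval hsplit, le_trans h1 (le_of_eq h2)]
      have : ‖(G n).eval z‖ ≤ CO * nrm (G n) := by
        rw [hCO, div_mul_eq_mul_div, le_div_iff₀ hcpos]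
        calc ‖(G n).eval z‖ * c ≤ 2 * d * (Fl1 * nrm (G n)) := hGz
          _ = 2 * d * Fl1 * nrm (G n) := by ring
      refine le_trans this ?_
      exact mul_le_mul_of_nonneg_right (le_max_right _ _) (nrm_nonneg _)
  -- convergence of the norms
  have hmono : ∀ m n, m ≤ n → hardyNormSq (G n) ≤ hardyNormSq (G m) := by
    intro m n hmn
    exact hpopt n (p m) (le_trans (hpdeg m) hmn)
  have hsmall : ∀ ε : ℝ, 0 < ε → ∃ m, hardyNormSq (G m) < ε := by
    intro ε hε
    set B : ℝ := (d : ℝ) * 2 ^ d with hB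
    have hB0 : 0 ≤ B := by positivity
    obtain ⟨mm, hmm⟩ := exists_nat_gt (B ^ 2 / ε)
    set R : Multiset ℂ := f.roots with hR
    have hRcard : Multiset.card R = d := by
      rw [hR, hd]
      exact Polynomial.splits_iff_card_roots.mp (IsAlgClosed.splits f)
    have hR1 : ∀ z ∈ R, 1 ≤ ‖z‖ := by
      intro z hz
      exact hroots z (Polynomial.mem_roots'.mp hz).2
    set W : Polynomial ℂ := (R.map (fun z => 1 - gm mm z)).prod with hW
    have htel : nrm (1 - W) ≤ B * Real.sqrt (1 / (mm + 2)) := by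
      have := telescope mm R hR1
      rwa [hRcard] at this
    -- divisibility
    have hdvd : (R.map (fun z => X - C z)).prod ∣ W := by
      rw [hW]
      refine Multiset.prod_dvd_prod_of_dvd _ _ ?_
      intro z hzR
      refine Polynomial.dvd_iff_isRoot.mpr ?_
      rw [Polynomial.IsRoot, Polynomial.eval_sub, Polynomial.eval_one,
        gm_eval_self (hR1 z hzR)]
      ring
    obtain ⟨Q, hQ⟩ := hdvd
    have hlead : f.leadingCoeff ≠ 0 := Polynomial.leadingCoeff_ne_zero.mpr hf
    have hfactor : C f.leadingCoeff * (R.map (fun z => X - C z)).prod = f := by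
      rw [hR]
      exact Polynomial.C_leadingCoeff_mul_prod_multiset_X_sub_C (hd ▸ hRcard)
    have hPi : (R.map (fun z => X - C z)).prod = C f.leadingCoeff⁻¹ * f := by
      calc (R.map (fun z => X - C z)).prod
          = (C f.leadingCoeff⁻¹ * C f.leadingCoeff) * (R.map (fun z => X - C z)).prod := by
            rw [← Polynomial.C_mul, inv_mul_cancel₀ hlead, Polynomial.C_1, one_mul]
        _ = C f.leadingCoeff⁻¹ * (C f.leadingCoeff * (R.map (fun z => X - C z)).prod) := by
            ring
        _ = C f.leadingCoeff⁻¹ * f := by rw [hfactor]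
    set q : Polynomial ℂ := C f.leadingCoeff⁻¹ * Q with hq
    have hqf : q * f = W := by
      rw [hq, hQ, hPi]
      ring
    refine ⟨q.natDegree, ?_⟩
    have h1 : hardyNormSq (G q.natDegree) ≤ hardyNormSq (1 - q * f) :=
      hpopt q.natDegree q le_rfl
    rw [hqf] at h1
    have h2 : hardyNormSq (1 - W) = nrm (1 - W) ^ 2 := (nrm_sq _).symm
    have h3 : nrm (1 - W) ^ 2 ≤ (B * Real.sqrt (1 / (mm + 2))) ^ 2 :=
      pow_le_pow_left₀ (nrm_nonneg _) htel 2
    have h4 : (B * Real.sqrt (1 / (mm + 2))) ^ 2 = B ^ 2 * (1 / (mm + 2)) := by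
      rw [mul_pow, Real.sq_sqrt (by positivity)]
    have h5 : B ^ 2 * (1 / (mm + 2)) < ε := by
      have hm2 : (0:ℝ) < (mm : ℝ) + 2 := by positivity
      rw [mul_one_div, div_lt_iff₀ hm2]
      have h6 : B ^ 2 < mm * ε := by
        have := (div_lt_iff₀ hε).mp hmm
        linarith
      nlinarith
    calc hardyNormSq (G q.natDegree) ≤ hardyNormSq (1 - W) := h1
      _ = nrm (1 - W) ^ 2 := h2
      _ ≤ (B * Real.sqrt (1 / (mm + 2))) ^ 2 := h3
      _ = B ^ 2 * (1 / (mm + 2)) := h4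
      _ < ε := h5
  -- assembly
  rw [Metric.tendstoUniformlyOn_iff]
  intro ε hε
  set ε' : ℝ := ε / (CC + 1) with hε'def
  have hε'pos : 0 < ε' := by rw [hε'def]; positivity
  obtain ⟨m₀, hm₀⟩ := hsmall (ε' ^ 2) (pow_pos hε'pos 2)
  filter_upwards [Filter.eventually_ge_atTop m₀] with n hn
  intro z hzK
  have h1 : hardyNormSq (G n) ≤ hardyNormSq (G m₀) := hmono m₀ n hn
  have h2 : nrm (G n) < ε' := by
    have h3 : hardyNormSq (G n) < ε' ^ 2 := lt_of_le_of_lt h1 hm₀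
    have h4 : nrm (G n) ^ 2 < ε' ^ 2 := by rw [nrm_sq]; exact h3
    exact lt_of_pow_lt_pow_left₀ 2 (le_of_lt hε'pos) h4
  have heq : (G n).eval z = 1 - (p n).eval z * f.eval z := by
    rw [hG]
    simp
  have hb := hpt n z hzK
  rw [heq] at hb
  rw [dist_comm, dist_zero_right]
  calc ‖1 - (p n).eval z * f.eval z‖ ≤ CC * nrm (G n) := hb
    _ ≤ CC * ε' := mul_le_mul_of_nonneg_left (le_of_lt h2) hCC0
    _ < (CC + 1) * ε' := mul_lt_mul_of_pos_right (lt_add_one CC) hε'pos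
    _ = ε := by
        rw [hε'def]
        field_simp
end

section
/- Let ζ_1, …, ζ_s be distinct complex numbers with |ζ_i| > 1 for all i. Then the s×s matrix B with entries b_{l,m} = 1/(ζ_l · \overline{ζ_m} − 1) is Hermitian positive definite; in particular, det(B) > 0. -/
open scoped ComplexOrder

theorem stmt10
    (s : ℕ) (hs : 0 < s) (ζ : Fin s → ℂ)
    (hinj : Function.Injective ζ) (hζ : ∀ i, 1 < ‖ζ i‖)
    (B : Matrix (Fin s) (Fin s) ℂ)
    (hB : ∀ l m, B l m = 1 / (ζ l * starRingEnd ℂ (ζ m) - 1)) :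
    B.PosDef ∧ B.det.im = 0 ∧ 0 < B.det.re := by
  have hζ0 : ∀ i, ζ i ≠ 0 := fun i h => by
    have := hζ i; rw [h] at this; norm_num at this
  set c : Fin s → ℂ := fun i => (ζ i)⁻¹ with hc
  have hc0 : ∀ i, c i ≠ 0 := fun i => inv_ne_zero (hζ0 i)
  have hcn : ∀ i, ‖c i‖ < 1 := fun i => by
    rw [hc]; simp only [norm_inv]
    rw [inv_lt_one_iff₀]
    right; exact hζ i
  have hr : ∀ l m, ‖c l * starRingEnd ℂ (c m)‖ < 1 := fun l m => by
    rw [norm_mul]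
    calc ‖c l‖ * ‖starRingEnd ℂ (c m)‖ ≤ 1 * ‖starRingEnd ℂ (c m)‖ := by
          apply mul_le_mul_of_nonneg_right (hcn l).le (norm_nonneg _)
      _ = ‖c m‖ := by rw [one_mul, RingHomIsometric.norm_map]
      _ < 1 := hcn m
  have hdenom : ∀ l m, ζ l * starRingEnd ℂ (ζ m) - 1 ≠ 0 := by
    intro l m h
    have h2 : ζ l * starRingEnd ℂ (ζ m) = 1 := by linear_combination h
    have h1 : ‖ζ l * starRingEnd ℂ (ζ m)‖ = 1 := by rw [h2]; simp
    rw [norm_mul, RingHomIsometric.norm_map] at h1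
    have h3 : 1 * 1 < ‖ζ l‖ * ‖ζ m‖ :=
      mul_lt_mul'' (hζ l) (hζ m) one_pos.le one_pos.le
    rw [h1] at h3; simp at h3
  -- summability of geometric series
  have hsumgeo : ∀ (z : ℂ), ‖z‖ < 1 → Summable (fun n : ℕ => z ^ (n + 1)) := by
    intro z hz
    simpa [pow_succ, mul_comm] using (summable_geometric_of_norm_lt_one hz).mul_left z
  -- B entries as geometric series
  have hBtsum : ∀ l m, B l m = ∑' n : ℕ, (c l * starRingEnd ℂ (c m)) ^ (n + 1) := by
    intro l m
    set a := c l * starRingEnd ℂ (c m) with ha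
    have ha1 : ‖a‖ < 1 := hr l m
    have h1a : (1 : ℂ) - a ≠ 0 := by
      intro h
      have : a = 1 := by linear_combination -h
      rw [this] at ha1; simp at ha1
    have hζm : starRingEnd ℂ (ζ m) ≠ 0 := by
      simpa using hζ0 m
    have : ∑' n : ℕ, a ^ (n + 1) = a * (1 - a)⁻¹ := by
      rw [← tsum_geometric_of_norm_lt_one ha1, ← tsum_mul_left]
      congr 1; ext n; rw [pow_succ, mul_comm]
    have hcm : starRingEnd ℂ ((ζ m)⁻¹) = (starRingEnd ℂ (ζ m))⁻¹ := map_inv₀ _ _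
    have hw : ζ l * starRingEnd ℂ (ζ m) ≠ 0 := mul_ne_zero (hζ0 l) hζm
    have haw : a = (ζ l * starRingEnd ℂ (ζ m))⁻¹ := by
      rw [ha, hc]; show (ζ l)⁻¹ * starRingEnd ℂ ((ζ m)⁻¹) = _
      rw [hcm, mul_inv]
    have key : (1 : ℂ) - a
        = (ζ l * starRingEnd ℂ (ζ m) - 1) * (ζ l * starRingEnd ℂ (ζ m))⁻¹ := by
      rw [haw, sub_mul, mul_inv_cancel₀ hw, one_mul]
    rw [this, hB l m, key, haw]
    rw [div_eq_iff (hdenom l m)]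
    field_simp
    exact (div_self (mul_ne_zero (hζ0 l) (hdenom l m))).symm
  -- Hermitian
  have hHerm : B.IsHermitian := by
    apply Matrix.IsHermitian.ext
    intro i j
    rw [hB j i, hB i j]
    show starRingEnd ℂ _ = _
    rw [map_div₀, map_sub, map_mul, map_one, Complex.conj_conj, mul_comm]
  have hPD : B.PosDef := by
    refine Matrix.posDef_iff_dotProduct_mulVec.mpr ⟨hHerm, fun x hx => ?_⟩
    set g : ℕ → ℂ := fun n => ∑ m : Fin s, x m * (starRingEnd ℂ (c m)) ^ (n + 1) with hg
    set F : Fin s → Fin s → ℕ → ℂ := fun l m n =>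
      (starRingEnd ℂ (x l) * x m) * (c l * starRingEnd ℂ (c m)) ^ (n + 1) with hF
    have hterm : ∀ l m : Fin s, Summable (F l m) :=
      fun l m => (hsumgeo _ (hr l m)).mul_left _
    have hinner : ∀ n : ℕ, (∑ l : Fin s, ∑ m : Fin s, F l m n)
        = starRingEnd ℂ (g n) * g n := by
      intro n
      rw [hg]
      simp only [map_sum, map_mul, map_pow, Complex.conj_conj, Finset.sum_mul_sum]
      refine Finset.sum_congr rfl fun l _ => Finset.sum_congr rfl fun m _ => ?_
      rw [hF]; simp only [mul_pow]; ring
    have hQ : dotProduct (star x) (B.mulVec x)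
        = ∑ l : Fin s, ∑ m : Fin s, (starRingEnd ℂ (x l) * x m) * B l m := by
      simp only [dotProduct, Matrix.mulVec, Pi.star_apply, RCLike.star_def,
        Finset.mul_sum]
      refine Finset.sum_congr rfl fun l _ => Finset.sum_congr rfl fun m _ => ?_
      ring
    have hQ2 : dotProduct (star x) (B.mulVec x)
        = ∑' n : ℕ, (starRingEnd ℂ (g n) * g n) := by
      rw [hQ]
      have e1 : ∀ l m : Fin s, (starRingEnd ℂ (x l) * x m) * B l m = ∑' n : ℕ, F l m n := by
        intro l m; rw [hBtsum l m, hF, tsum_mul_left]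
      calc ∑ l : Fin s, ∑ m : Fin s, (starRingEnd ℂ (x l) * x m) * B l m
          = ∑ l : Fin s, ∑ m : Fin s, ∑' n : ℕ, F l m n := by
            exact Finset.sum_congr rfl fun l _ => Finset.sum_congr rfl fun m _ => e1 l m
        _ = ∑ l : Fin s, ∑' n : ℕ, ∑ m : Fin s, F l m n :=
            Finset.sum_congr rfl fun l _ => (Summable.tsum_finsetSum fun m _ => hterm l m).symm
        _ = ∑' n : ℕ, ∑ l : Fin s, ∑ m : Fin s, F l m n :=
            (Summable.tsum_finsetSum fun l _ => summable_sum fun m _ => hterm l m).symm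
        _ = ∑' n : ℕ, (starRingEnd ℂ (g n) * g n) := tsum_congr hinner
    have hsumF : Summable (fun n : ℕ => starRingEnd ℂ (g n) * g n) := by
      refine (summable_congr hinner).mp ?_
      exact summable_sum fun l _ => summable_sum fun m _ => hterm l m
    have hofr : ∀ n : ℕ, starRingEnd ℂ (g n) * g n = ((Complex.normSq (g n) : ℝ) : ℂ) :=
      fun n => Complex.normSq_eq_conj_mul_self.symm
    have hsumR : Summable (fun n : ℕ => Complex.normSq (g n)) := by
      rw [← Complex.summable_ofReal]
      exact (summable_congr hofr).mp hsumF
    -- existence of a nonzero g n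
    have hex : ∃ n : ℕ, g n ≠ 0 := by
      by_contra h
      push_neg at h
      have hw : Function.Injective (fun m : Fin s => starRingEnd ℂ (c m)) := by
        intro a b hab
        apply hinj
        have : c a = c b := (starRingEnd ℂ).injective hab
        rw [hc] at this
        exact inv_injective this
      have hfv : ∀ i : Fin s, (∑ j : Fin s,
          (x j * starRingEnd ℂ (c j)) * (starRingEnd ℂ (c j)) ^ (i : ℕ)) = 0 := by
        intro i
        have := h (i : ℕ)
        rw [hg] at this
        rw [← this]
        refine Finset.sum_congr rfl fun j _ => ?_
        rw [pow_succ]; ring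
      have hv0 := Matrix.eq_zero_of_forall_pow_sum_mul_pow_eq_zero hw hfv
      apply hx
      funext m
      have := congrFun hv0 m
      simp only [Pi.zero_apply, mul_eq_zero] at this
      rcases this with h1 | h1
      · exact h1
      · exact absurd h1 (by simpa using hc0 m)
    obtain ⟨n0, hn0⟩ := hex
    rw [hQ2]
    have : (∑' n : ℕ, (starRingEnd ℂ (g n) * g n))
        = ((∑' n : ℕ, Complex.normSq (g n) : ℝ) : ℂ) := by
      rw [Complex.ofReal_tsum]
      exact tsum_congr hofr
    rw [this, Complex.zero_lt_real]
    exact Summable.tsum_pos hsumR (fun n => Complex.normSq_nonneg _) n0 (Complex.normSq_pos.mpr hn0)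
  refine ⟨hPD, ?_, ?_⟩
  · have := hPD.det_pos
    rw [Complex.lt_def] at this
    exact this.2.symm
  · have := hPD.det_pos
    rw [Complex.lt_def] at this
    exact this.1
end

section
/- Let d ≥ 1 and n ∈ ℕ, let g_d(z) = (z − 1)^d, and let p_n be the n-th optimal polynomial approximant to 1/g_d in H²_ω. Let E be the d×d matrix with entries E_{i,j} = ∑_{k=0}^{n+d} k^{i+j-2}/ω_k for 1 ≤ i, j ≤ d (with the convention 0^0 = 1). Then E is invertible, and setting (A_{1,n}, …, A_{d,n})^t = E^{-1} · (1, 0, …, 0)^t, for every k with 0 ≤ k ≤ n + d the coefficient of z^k in the polynomial 1 − p_n g_d equals (A_{1,n} + A_{2,n} k + … + A_{d,n} k^{d-1})/ω_k; moreover ‖1 − p_n g_d‖²_ω = (1 − p_n g_d)(0) = A_{1,n} = (E^{-1})_{1,1}. -/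
open Polynomial Finset fwdDiff

/-- The squared weighted `H²_ω` norm of a polynomial `g = ∑ a_k z^k`,
namely `∑_k |a_k|² ω_k`. -/
noncomputable def wnormSq (ω : ℕ → ℝ) (g : Polynomial ℂ) : ℝ :=
  ∑ k ∈ Finset.range (g.natDegree + 1), ‖g.coeff k‖ ^ 2 * ω k


lemma polydiff : ∀ (d : ℕ) (Q : Polynomial ℂ), Q.degree < (d : ℕ) →
    (fwdDiff (1 : ℕ))^[d] (fun k : ℕ => Q.eval (k : ℂ)) = 0 := by
  intro d
  induction d with
  | zero =>
      intro Q hQ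
      have hQ0 : Q = 0 := by
        rw [← Polynomial.degree_eq_bot]
        exact Nat.WithBot.lt_zero_iff.mp (by exact_mod_cast hQ)
      subst hQ0
      funext k; simp
  | succ d IH =>
      intro Q hQ
      rw [Function.iterate_succ_apply]
      have hstep : fwdDiff (1 : ℕ) (fun k : ℕ => Q.eval (k : ℂ))
          = fun k : ℕ => (Q.comp (X + C 1) - Q).eval (k : ℂ) := by
        funext k
        simp only [fwdDiff, Polynomial.eval_sub, Polynomial.eval_comp, Polynomial.eval_add,
          Polynomial.eval_X, Polynomial.eval_C]
        push_cast
        ring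
      rw [hstep]
      apply IH
      by_cases hQ0 : Q = 0
      · subst hQ0
        rw [Polynomial.zero_comp, sub_zero, Polynomial.degree_zero]
        exact_mod_cast WithBot.bot_lt_coe d
      · have hmx : (X + C (1:ℂ)).natDegree = 1 := Polynomial.natDegree_X_add_C 1
        have h1 : (Q.comp (X + C 1)).natDegree = Q.natDegree := by
          rw [Polynomial.natDegree_comp, hmx, mul_one]
        have hlc : (Q.comp (X + C 1)).leadingCoeff = Q.leadingCoeff := by
          rw [Polynomial.leadingCoeff_comp (by rw [hmx]; norm_num)]
          have : (X + C (1:ℂ)).leadingCoeff = 1 := Polynomial.monic_X_add_C 1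
          rw [this, one_pow, mul_one]
        have hcne : Q.comp (X + C 1) ≠ 0 := by
          intro h
          apply hQ0
          rw [← Polynomial.leadingCoeff_eq_zero, ← hlc, h, Polynomial.leadingCoeff_zero]
        have hcomp : (Q.comp (X + C 1)).degree = Q.degree := by
          rw [Polynomial.degree_eq_natDegree hcne, Polynomial.degree_eq_natDegree hQ0, h1]
        have hsub : (Q.comp (X + C 1) - Q).degree < Q.degree := by
          have := Polynomial.degree_sub_lt hcomp hcne hlc
          rwa [hcomp] at this
        have hQd : Q.degree ≤ (d : ℕ) := by
          have h2 : Q.natDegree < d + 1 := (Polynomial.natDegree_lt_iff_degree_lt hQ0).2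
            (by exact_mod_cast hQ)
          have h3 : Q.natDegree ≤ d := Nat.lt_succ_iff.mp h2
          calc Q.degree ≤ (Q.natDegree : WithBot ℕ) := Polynomial.degree_le_natDegree
            _ ≤ (d : WithBot ℕ) := by exact_mod_cast h3
        exact lt_of_lt_of_le hsub hQd

lemma polyrec (d : ℕ) (Q : Polynomial ℂ) (hQ : Q.degree < (d : ℕ)) (m : ℕ) :
    ∑ j ∈ Finset.range (d + 1), ((X - C 1 : Polynomial ℂ) ^ d).coeff j
      * Q.eval ((m + j : ℕ) : ℂ) = 0 := by
  have h0 := congrFun (polydiff d Q hQ) m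
  rw [fwdDiff_iter_eq_sum_shift] at h0
  simp only [Pi.zero_apply] at h0
  rw [← h0]
  refine Finset.sum_congr rfl ?_
  intro j _
  have hco : ((X - C 1 : Polynomial ℂ) ^ d).coeff j = (-1 : ℂ) ^ (d - j) * (d.choose j) := by
    rw [show (X - C (1:ℂ)) = X + C (-1) by rw [map_neg]; ring, Polynomial.coeff_X_add_C_pow]
  rw [hco, zsmul_eq_mul, smul_eq_mul, mul_one]
  push_cast
  ring

lemma theta_mom : ∀ (i : ℕ) (h : Polynomial ℂ), ((X - C 1 : Polynomial ℂ) ^ (i + 1) ∣ h) →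
    ∀ N, h.natDegree < N → ∑ k ∈ Finset.range N, h.coeff k * (k : ℂ) ^ i = 0 := by
  intro i
  induction i with
  | zero =>
      intro h hdvd N hN
      have : ∑ k ∈ Finset.range N, h.coeff k * (k : ℂ) ^ 0 = h.eval 1 := by
        rw [Polynomial.eval_eq_sum_range' hN]
        refine Finset.sum_congr rfl fun k _ => by rw [pow_zero, one_pow]
      rw [this]
      obtain ⟨u, hu⟩ := hdvd
      rw [hu]
      simp
  | succ i IH =>
      intro h hdvd N hN
      set h' : Polynomial ℂ := X * Polynomial.derivative h with hh'
      have hcoeff : ∀ k : ℕ, h'.coeff k = (k : ℂ) * h.coeff k := by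
        intro k
        cases k with
        | zero => simp [hh']
        | succ k =>
            rw [hh', Polynomial.coeff_X_mul, Polynomial.coeff_derivative]
            push_cast
            ring
      have hdeg : h'.natDegree < N := by
        rcases Nat.eq_zero_or_pos h.natDegree with h0 | h0
        · obtain ⟨a, ha⟩ := Polynomial.natDegree_eq_zero.mp h0
          rw [hh', ← ha]
          simp only [Polynomial.derivative_C, mul_zero, Polynomial.natDegree_zero]
          omega
        · have : h'.natDegree ≤ 1 + (h.natDegree - 1) :=
            le_trans (Polynomial.natDegree_mul_le) (by
              gcongr
              · exact le_of_eq Polynomial.natDegree_X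
              · exact Polynomial.natDegree_derivative_le h)
          omega
      have hdvd' : (X - C 1 : Polynomial ℂ) ^ (i + 1) ∣ h' := by
        obtain ⟨u, hu⟩ := hdvd
        refine ⟨X * ((C ((i : ℂ) + 2)) * u + (X - C 1) * Polynomial.derivative u), ?_⟩
        rw [hh', hu, Polynomial.derivative_mul, Polynomial.derivative_pow,
          Polynomial.derivative_X_sub_C]
        push_cast
        ring
      have := IH h' hdvd' N hdeg
      rw [← this]
      refine Finset.sum_congr rfl fun k _ => ?_
      rw [hcoeff k, pow_succ']
      ring


lemma detE (d N : ℕ) (hd : 0 < d) (hdN : d ≤ N) (ω : ℕ → ℝ) (hω : ∀ k, 0 < ω k)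
    (E : Matrix (Fin d) (Fin d) ℝ)
    (hE : ∀ i j : Fin d, E i j = ∑ k ∈ Finset.range N, (k : ℝ) ^ ((i : ℕ) + (j : ℕ)) / ω k) :
    E.det ≠ 0 := by
  intro hdet
  obtain ⟨v, hv0, hv⟩ := (Matrix.exists_mulVec_eq_zero_iff).mpr hdet
  set P : ℕ → ℝ := fun k => ∑ i : Fin d, v i * (k : ℝ) ^ (i : ℕ) with hP
  have hquad : ∑ k ∈ Finset.range N, (P k) ^ 2 / ω k = 0 := by
    have key : ∀ k : ℕ, (P k) ^ 2 / ω k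
        = ∑ i : Fin d, ∑ j : Fin d, v i * v j * ((k : ℝ) ^ ((i : ℕ) + (j : ℕ)) / ω k) := by
      intro k
      rw [hP, sq, Finset.sum_mul_sum, Finset.sum_div]
      refine Finset.sum_congr rfl fun i _ => ?_
      rw [Finset.sum_div]
      refine Finset.sum_congr rfl fun j _ => ?_
      rw [pow_add]
      ring
    calc ∑ k ∈ Finset.range N, (P k) ^ 2 / ω k
        = ∑ k ∈ Finset.range N, ∑ i : Fin d, ∑ j : Fin d,
            v i * v j * ((k : ℝ) ^ ((i : ℕ) + (j : ℕ)) / ω k) :=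
          Finset.sum_congr rfl fun k _ => key k
      _ = ∑ i : Fin d, ∑ j : Fin d, v i * v j * E i j := by
          rw [Finset.sum_comm]
          refine Finset.sum_congr rfl fun i _ => ?_
          rw [Finset.sum_comm]
          refine Finset.sum_congr rfl fun j _ => ?_
          rw [hE i j, Finset.mul_sum]
      _ = ∑ i : Fin d, (E.mulVec v i) * v i := by
          refine Finset.sum_congr rfl fun i _ => ?_
          simp only [Matrix.mulVec, dotProduct, Finset.sum_mul]
          refine Finset.sum_congr rfl fun j _ => ?_
          ring
      _ = 0 := by rw [hv]; simp
  have hPk : ∀ k ∈ Finset.range N, P k = 0 := by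
    intro k hk
    have hnn : ∀ k ∈ Finset.range N, 0 ≤ (P k) ^ 2 / ω k := fun k _ =>
      div_nonneg (sq_nonneg _) (le_of_lt (hω k))
    have := (Finset.sum_eq_zero_iff_of_nonneg hnn).mp hquad k hk
    have h2 : (P k) ^ 2 = 0 := by
      have := div_eq_zero_iff.mp this
      rcases this with h | h
      · exact h
      · exact absurd h (ne_of_gt (hω k))
    exact pow_eq_zero_iff two_ne_zero |>.mp h2
  -- polynomial vanishing
  set PR : Polynomial ℝ := ∑ i : Fin d, Polynomial.C (v i) * Polynomial.X ^ (i : ℕ) with hPR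
  have hPReval : ∀ k : ℕ, PR.eval (k : ℝ) = P k := by
    intro k
    rw [hPR]
    simp [Polynomial.eval_finset_sum, hP]
  have hPRdeg : PR.natDegree < d := by
    have : PR.natDegree ≤ d - 1 := by
      refine Polynomial.natDegree_sum_le_of_forall_le _ _ fun i _ => ?_
      refine le_trans (Polynomial.natDegree_C_mul_X_pow_le _ _) ?_
      omega
    omega
  have hPR0 : PR = 0 := by
    refine Polynomial.eq_zero_of_natDegree_lt_card_of_eval_eq_zero' PR
      ((Finset.range d).image (fun k : ℕ => (k : ℝ))) ?_ ?_
    · intro x hx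
      obtain ⟨k, hk, rfl⟩ := Finset.mem_image.mp hx
      rw [hPReval]
      exact hPk k (Finset.mem_range.mpr (lt_of_lt_of_le (Finset.mem_range.mp hk) hdN))
    · rw [Finset.card_image_of_injective _ (Nat.cast_injective), Finset.card_range]
      exact hPRdeg
  apply hv0
  funext i
  have : PR.coeff (i : ℕ) = v i := by
    rw [hPR, Polynomial.finset_sum_coeff]
    rw [Finset.sum_eq_single i]
    · simp
    · intro j _ hji
      rw [Polynomial.coeff_C_mul, Polynomial.coeff_X_pow, if_neg (by
        intro h
        exact hji (Fin.ext h.symm)), mul_zero]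
    · intro h
      exact absurd (Finset.mem_univ i) h
  rw [Pi.zero_apply, ← this, hPR0, Polynomial.coeff_zero]

lemma wnormSq_eq_range (ω : ℕ → ℝ) (h : Polynomial ℂ) (N : ℕ) (hN : h.natDegree < N) :
    wnormSq ω h = ∑ k ∈ Finset.range N, ‖h.coeff k‖ ^ 2 * ω k := by
  refine Finset.sum_subset (Finset.range_subset_range.2 hN) ?_
  intro k _ hk'
  have : h.natDegree < k := by
    simp only [Finset.mem_range, not_lt] at hk'
    omega
  rw [Polynomial.coeff_eq_zero_of_natDegree_lt this]
  simp


theorem stmt17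
    (ω : ℕ → ℝ) (hω0 : ω 0 = 1) (hωpos : ∀ k, 0 < ω k)
    (hωlim : Filter.Tendsto (fun k => ω k / ω (k + 1)) Filter.atTop (nhds 1))
    (d : ℕ) (hd : 0 < d) (n : ℕ)
    (g : Polynomial ℂ) (hg : g = (Polynomial.X - Polynomial.C 1) ^ d)
    (p : Polynomial ℂ) (hpdeg : p.natDegree ≤ n)
    (hpopt : ∀ q : Polynomial ℂ, q.natDegree ≤ n →
      wnormSq ω (1 - p * g) ≤ wnormSq ω (1 - q * g))
    (E : Matrix (Fin d) (Fin d) ℝ)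
    (hE : ∀ i j : Fin d, E i j
      = ∑ k ∈ Finset.range (n + d + 1), (k : ℝ) ^ ((i : ℕ) + (j : ℕ)) / ω k) :
    IsUnit E.det ∧
    (∀ k : ℕ, k ≤ n + d →
      ((1 : Polynomial ℂ) - p * g).coeff k
        = (((∑ i : Fin d, E⁻¹ i ⟨0, hd⟩ * (k : ℝ) ^ (i : ℕ)) / ω k : ℝ) : ℂ)) ∧
    wnormSq ω (1 - p * g) = E⁻¹ ⟨0, hd⟩ ⟨0, hd⟩ ∧
    ((1 : Polynomial ℂ) - p * g).eval 0 = ((E⁻¹ ⟨0, hd⟩ ⟨0, hd⟩ : ℝ) : ℂ) := by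
  set N := n + d + 1 with hN
  have hωne : ∀ k, (ω k : ℝ) ≠ 0 := fun k => ne_of_gt (hωpos k)
  have hωcne : ∀ k, ((ω k : ℝ) : ℂ) ≠ 0 := fun k => Complex.ofReal_ne_zero.mpr (hωne k)
  have hgmonic : g.Monic := hg ▸ (Polynomial.monic_X_sub_C (1:ℂ)).pow d
  have hgdeg : g.natDegree = d := by
    rw [hg, Polynomial.natDegree_pow, Polynomial.natDegree_X_sub_C, mul_one]
  have hgd1 : g.coeff d = 1 := by
    have := hgmonic.coeff_natDegree
    rwa [hgdeg] at this
  have hdegF : ∀ q : Polynomial ℂ, q.natDegree ≤ n → (1 - q * g).natDegree < N := by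
    intro q hq
    have h1 : (q * g).natDegree ≤ n + d :=
      le_trans Polynomial.natDegree_mul_le (by rw [hgdeg]; omega)
    have := Polynomial.natDegree_sub_le (1 : Polynomial ℂ) (q * g)
    simp only [Polynomial.natDegree_one] at this
    omega
  have hsum : ∀ q : Polynomial ℂ, q.natDegree ≤ n →
      wnormSq ω (1 - q * g) = ∑ k ∈ Finset.range N, ‖(1 - q * g).coeff k‖ ^ 2 * ω k :=
    fun q hq => wnormSq_eq_range ω _ N (hdegF q hq)
  set F : Polynomial ℂ := 1 - p * g with hF
  set c : ℕ → ℂ := fun k => F.coeff k with hc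
  -- orthogonality
  have horth : ∀ q : Polynomial ℂ, q.natDegree ≤ n →
      ∑ k ∈ Finset.range N, c k * (starRingEnd ℂ) ((q * g).coeff k) * (ω k : ℂ) = 0 := by
    intro q hq
    set v : ℕ → ℂ := fun k => (q * g).coeff k with hv
    set Z : ℂ := ∑ k ∈ Finset.range N, c k * (starRingEnd ℂ) (v k) * (ω k : ℂ) with hZ
    show Z = 0
    by_contra hZ0
    set W : ℝ := ∑ k ∈ Finset.range N, Complex.normSq (v k) * ω k with hW
    have hWnn : 0 ≤ W :=
      Finset.sum_nonneg fun k _ => mul_nonneg (Complex.normSq_nonneg _) (le_of_lt (hωpos k))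
    have hns : ∀ z : ℂ, ‖z‖ ^ 2 = Complex.normSq z := fun z => by
      rw [Complex.normSq_eq_norm_sq]
    have hkey : ∀ r : ℂ, 0 ≤ Complex.normSq r * W - 2 * ((starRingEnd ℂ) r * Z).re := by
      intro r
      have hq' : (p + Polynomial.C r * q).natDegree ≤ n := by
        refine le_trans (Polynomial.natDegree_add_le _ _) (max_le hpdeg ?_)
        exact le_trans Polynomial.natDegree_mul_le
          (by simp only [Polynomial.natDegree_C, zero_add]; exact hq)
      have hle := hpopt (p + Polynomial.C r * q) hq'
      rw [hsum p hpdeg, hsum _ hq'] at hle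
      have hpoly : (1 : Polynomial ℂ) - (p + Polynomial.C r * q) * g
          = F - Polynomial.C r * (q * g) := by
        rw [hF]; ring
      have hcoeff : ∀ k, ((1 : Polynomial ℂ) - (p + Polynomial.C r * q) * g).coeff k
          = c k - r * v k := by
        intro k
        rw [hpoly, Polynomial.coeff_sub, Polynomial.coeff_C_mul]
      have hexp : ∀ k, ‖c k - r * v k‖ ^ 2 * ω k
          = ‖c k‖ ^ 2 * ω k + Complex.normSq r * (Complex.normSq (v k) * ω k)
            - 2 * ((starRingEnd ℂ) r * (c k * (starRingEnd ℂ) (v k) * (ω k : ℂ))).re := by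
        intro k
        rw [hns, hns, Complex.normSq_sub, Complex.normSq_mul]
        have h1 : (c k * (starRingEnd ℂ) (r * v k)).re
            = ((starRingEnd ℂ) r * (c k * (starRingEnd ℂ) (v k))).re := by
          rw [map_mul]; ring_nf
        have h2 : ((starRingEnd ℂ) r * (c k * (starRingEnd ℂ) (v k) * (ω k : ℂ))).re
            = ((starRingEnd ℂ) r * (c k * (starRingEnd ℂ) (v k))).re * ω k := by
          rw [show (starRingEnd ℂ) r * (c k * (starRingEnd ℂ) (v k) * (ω k : ℂ))
              = ((starRingEnd ℂ) r * (c k * (starRingEnd ℂ) (v k))) * (ω k : ℂ) by ring]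
          simp [Complex.mul_re]
        rw [h2, ← h1]
        ring
      have hsum2 : ∑ k ∈ Finset.range N, ‖c k - r * v k‖ ^ 2 * ω k
          = (∑ k ∈ Finset.range N, ‖c k‖ ^ 2 * ω k) + Complex.normSq r * W
            - 2 * ((starRingEnd ℂ) r * Z).re := by
        rw [Finset.sum_congr rfl fun k _ => hexp k]
        rw [Finset.sum_sub_distrib, Finset.sum_add_distrib, ← Finset.mul_sum, ← hW]
        congr 1
        rw [← Finset.mul_sum, ← Complex.re_sum, ← Finset.mul_sum, ← hZ]
      have hle2 : ∑ k ∈ Finset.range N, ‖(1 - p * g).coeff k‖ ^ 2 * ω k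
          = ∑ k ∈ Finset.range N, ‖c k‖ ^ 2 * ω k := rfl
      have e3 : ∑ k ∈ Finset.range N, ‖(1 - (p + Polynomial.C r * q) * g).coeff k‖ ^ 2 * ω k
          = ∑ k ∈ Finset.range N, ‖c k - r * v k‖ ^ 2 * ω k :=
        Finset.sum_congr rfl (fun k _ => by rw [hcoeff k])
      rw [hle2, e3, hsum2] at hle
      linarith
    set t : ℝ := 1 / (W + 1) with ht
    have htpos : 0 < t := by rw [ht]; positivity
    have h1 := hkey ((t : ℂ) * Z)
    have hnsq : Complex.normSq ((t : ℂ) * Z) = t ^ 2 * Complex.normSq Z := by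
      rw [Complex.normSq_mul, Complex.normSq_ofReal]; ring
    have hre : ((starRingEnd ℂ) ((t : ℂ) * Z) * Z).re = t * Complex.normSq Z := by
      have e : (starRingEnd ℂ) ((t : ℂ) * Z) * Z = (t : ℂ) * (Z * (starRingEnd ℂ) Z) := by
        rw [map_mul, Complex.conj_ofReal]; ring
      rw [e, Complex.mul_conj, ← Complex.ofReal_mul, Complex.ofReal_re]
    have hZpos : 0 < Complex.normSq Z := Complex.normSq_pos.mpr hZ0
    rw [hnsq, hre] at h1
    have htW : t * W < 1 := by
      rw [ht, div_mul_eq_mul_div, one_mul, div_lt_one (by linarith)]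
      linarith
    nlinarith [mul_pos htpos hZpos, mul_pos (sub_pos.mpr htW) (mul_pos htpos hZpos)]
  -- recurrence for b k = c k * ω k
  have hgc : ∀ j, (starRingEnd ℂ) (g.coeff j) = g.coeff j := by
    intro j
    rw [hg, show (Polynomial.X - Polynomial.C (1:ℂ)) = Polynomial.X + Polynomial.C (-1) by
      rw [map_neg]; ring, Polynomial.coeff_X_add_C_pow]
    simp
  have hb : ∀ m, m ≤ n → ∑ j ∈ Finset.range (d + 1),
      g.coeff j * (c (m + j) * (ω (m + j) : ℂ)) = 0 := by
    intro m hm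
    have h0 := horth (Polynomial.X ^ m) (by rw [Polynomial.natDegree_X_pow]; exact hm)
    have he : ∀ k, ((Polynomial.X ^ m : Polynomial ℂ) * g).coeff k
        = if m ≤ k then g.coeff (k - m) else 0 := by
      intro k
      rw [mul_comm, Polynomial.coeff_mul_X_pow']
    simp only [he, apply_ite (starRingEnd ℂ), map_zero, hgc] at h0
    have hmN : m ≤ N := by omega
    rw [Finset.range_eq_Ico, ← Finset.sum_Ico_consecutive _ (Nat.zero_le m) hmN] at h0
    have hz1 : ∑ k ∈ Finset.Ico 0 m, c k * (if m ≤ k then g.coeff (k - m) else 0) * (ω k : ℂ)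
        = 0 := by
      refine Finset.sum_eq_zero fun k hk => ?_
      rw [if_neg (by simp only [Finset.mem_Ico] at hk; omega)]
      ring
    rw [hz1, zero_add, Finset.sum_Ico_eq_sum_range] at h0
    have h1 : ∀ j, c (m + j) * (if m ≤ m + j then g.coeff (m + j - m) else 0) * (ω (m + j) : ℂ)
        = g.coeff j * (c (m + j) * (ω (m + j) : ℂ)) := by
      intro j
      rw [if_pos (Nat.le_add_right m j), Nat.add_sub_cancel_left]
      ring
    simp only [h1] at h0
    rw [← h0]
    refine Finset.sum_subset (Finset.range_subset_range.2 (by omega)) ?_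
    intro j _ hj
    have hdj : d < j := by simp only [Finset.mem_range, not_lt] at hj; omega
    rw [Polynomial.coeff_eq_zero_of_natDegree_lt (by rw [hgdeg]; omega), zero_mul]
  -- interpolation polynomial
  set Q : Polynomial ℂ := Lagrange.interpolate (Finset.range d) (fun k : ℕ => (k : ℂ))
      (fun k => c k * (ω k : ℂ)) with hQ
  have hinj : Set.InjOn (fun k : ℕ => (k : ℂ)) (Finset.range d) :=
    fun a _ b _ hab => Nat.cast_injective hab
  have hQdeg : Q.degree < (d : ℕ) := by
    have := Lagrange.degree_interpolate_lt (fun k => c k * (ω k : ℂ)) hinj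
    rwa [Finset.card_range] at this
  have hQnat : Q.natDegree < d := by
    by_cases hQ0 : Q = 0
    · rw [hQ0, Polynomial.natDegree_zero]; exact hd
    · exact (Polynomial.natDegree_lt_iff_degree_lt hQ0).2 hQdeg
  have hbQ : ∀ k, k ≤ n + d → c k * (ω k : ℂ) = Q.eval (k : ℂ) := by
    intro k
    induction k using Nat.strong_induction_on with
    | _ k IH =>
      intro hk
      by_cases hkd : k < d
      · exact (Lagrange.eval_interpolate_at_node (fun k => c k * (ω k : ℂ)) hinj
          (Finset.mem_range.mpr hkd)).symm
      · have hdk : d ≤ k := not_lt.mp hkd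
        set m := k - d with hmdef
        have hm : m ≤ n := by omega
        have hk' : k = m + d := by omega
        have h1 := hb m hm
        have h2 := polyrec d Q hQdeg m
        rw [← hg] at h2
        rw [Finset.sum_range_succ] at h1 h2
        have h3 : ∑ j ∈ Finset.range d, g.coeff j * (c (m + j) * (ω (m + j) : ℂ))
            = ∑ j ∈ Finset.range d, g.coeff j * Q.eval ((m + j : ℕ) : ℂ) := by
          refine Finset.sum_congr rfl fun j hj => ?_
          have hjd : j < d := Finset.mem_range.mp hj
          rw [IH (m + j) (by omega) (by omega)]
        rw [hgd1] at h1 h2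
        rw [hk']
        push_cast at h1 h2 h3 ⊢
        linear_combination h1 - h2 - h3
  -- moments
  have hmom : ∀ i, i < d → ∑ k ∈ Finset.range N, c k * (k : ℂ) ^ i
      = if i = 0 then 1 else 0 := by
    intro i hi
    have hdvd : (Polynomial.X - Polynomial.C 1 : Polynomial ℂ) ^ (i + 1) ∣ p * g := by
      refine dvd_trans ?_ (dvd_mul_left g p)
      rw [hg]
      exact pow_dvd_pow _ (by omega)
    have hpgdeg : (p * g).natDegree < N := by
      have := Polynomial.natDegree_mul_le (p := p) (q := g)
      rw [hgdeg] at this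
      omega
    have hT := theta_mom i (p * g) hdvd N hpgdeg
    have hsplit : ∑ k ∈ Finset.range N, c k * (k : ℂ) ^ i
        = ∑ k ∈ Finset.range N, ((1 : Polynomial ℂ).coeff k) * (k : ℂ) ^ i
          - ∑ k ∈ Finset.range N, (p * g).coeff k * (k : ℂ) ^ i := by
      rw [← Finset.sum_sub_distrib]
      refine Finset.sum_congr rfl fun k _ => ?_
      have : c k = (1 : Polynomial ℂ).coeff k - (p * g).coeff k := by
        rw [hc]
        simp only [hF, Polynomial.coeff_sub]
      rw [this]
      ring
    rw [hsplit, hT, sub_zero]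
    rw [Finset.sum_eq_single 0]
    · rw [Polynomial.coeff_one, if_pos rfl, one_mul, Nat.cast_zero, zero_pow_eq]
    · intro k _ hk0
      rw [Polynomial.coeff_one, if_neg hk0, zero_mul]
    · intro h
      exact absurd (Finset.mem_range.mpr (by omega : 0 < N)) h
  have hck : ∀ k, k ≤ n + d → c k = Q.eval (k : ℂ) * ((ω k : ℝ) : ℂ)⁻¹ := by
    intro k hk
    rw [← hbQ k hk, mul_inv_cancel_right₀ (hωcne k)]
  set i0 : Fin d := ⟨0, hd⟩ with hi0def
  set e1 : Fin d → ℂ := fun i => if i = i0 then 1 else 0 with he1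
  set β : Fin d → ℂ := fun j => Q.coeff (j : ℕ) with hβ
  set Ec : Matrix (Fin d) (Fin d) ℂ := E.map (algebraMap ℝ ℂ) with hEc
  have hvec : Ec.mulVec β = e1 := by
    funext i
    show ∑ j : Fin d, Ec i j * β j = e1 i
    have step1 : ∑ j : Fin d, Ec i j * β j
        = ∑ j : Fin d, ∑ k ∈ Finset.range N,
            (k : ℂ) ^ ((i : ℕ) + (j : ℕ)) * ((ω k : ℝ) : ℂ)⁻¹ * Q.coeff (j : ℕ) := by
      refine Finset.sum_congr rfl fun j _ => ?_
      have hmap : Ec i j = ((E i j : ℝ) : ℂ) := rfl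
      rw [hmap, hE i j]
      push_cast
      rw [Finset.sum_mul]
      exact Finset.sum_congr rfl fun k _ => by rw [div_eq_mul_inv]
    rw [step1, Finset.sum_comm]
    have step2 : ∑ k ∈ Finset.range N, ∑ j : Fin d,
        (k : ℂ) ^ ((i : ℕ) + (j : ℕ)) * ((ω k : ℝ) : ℂ)⁻¹ * Q.coeff (j : ℕ)
        = ∑ k ∈ Finset.range N, c k * (k : ℂ) ^ (i : ℕ) := by
      refine Finset.sum_congr rfl fun k hk => ?_
      have hkle : k ≤ n + d := by
        have := Finset.mem_range.mp hk
        omega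
      rw [hck k hkle, Polynomial.eval_eq_sum_range' hQnat, Finset.sum_range
        (fun j => Q.coeff j * (k : ℂ) ^ j), Finset.sum_mul, Finset.sum_mul]
      refine Finset.sum_congr rfl fun j _ => ?_
      rw [pow_add]
      ring
    rw [step2, hmom (i : ℕ) i.isLt]
    by_cases hii : i = i0
    · subst hii; simp [he1, hi0def]
    · have hni : ¬((i : ℕ) = 0) := fun h => hii (Fin.ext (by simpa using h))
      simp [he1, hii, hni]
  have hdet : E.det ≠ 0 := detE d N hd (by omega) ω hωpos E hE
  have hEu : IsUnit E.det := isUnit_iff_ne_zero.mpr hdet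
  have hEinv : E * E⁻¹ = 1 := Matrix.mul_nonsing_inv E hEu
  set B : Matrix (Fin d) (Fin d) ℂ := (E⁻¹).map (algebraMap ℝ ℂ) with hB
  have hEcB : Ec * B = 1 := by
    rw [hEc, hB, ← Matrix.map_mul, hEinv]
    exact Matrix.map_one _ (map_zero _) (map_one _)
  have hBEc : B * Ec = 1 := mul_eq_one_comm.mp hEcB
  have hβval : ∀ j : Fin d, β j = ((E⁻¹ j i0 : ℝ) : ℂ) := by
    have hβeq : β = B.mulVec e1 := by
      calc β = (1 : Matrix (Fin d) (Fin d) ℂ).mulVec β := (Matrix.one_mulVec β).symm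
        _ = (B * Ec).mulVec β := by rw [hBEc]
        _ = B.mulVec (Ec.mulVec β) := (Matrix.mulVec_mulVec β B Ec).symm
        _ = B.mulVec e1 := by rw [hvec]
    intro j
    rw [hβeq]
    show ∑ i : Fin d, B j i * e1 i = _
    rw [Finset.sum_eq_single i0]
    · simp [he1, hB, Matrix.map_apply]
    · intro i _ hii
      simp [he1, hii]
    · intro h
      exact absurd (Finset.mem_univ i0) h
  have hcoefform : ∀ k, k ≤ n + d → c k
      = (((∑ i : Fin d, E⁻¹ i i0 * (k : ℝ) ^ (i : ℕ)) / ω k : ℝ) : ℂ) := by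
    intro k hk
    rw [hck k hk, Polynomial.eval_eq_sum_range' hQnat,
      Finset.sum_range (fun j => Q.coeff j * (k : ℂ) ^ j)]
    push_cast
    rw [div_eq_mul_inv]
    congr 1
    refine Finset.sum_congr rfl fun j _ => ?_
    have := hβval j
    rw [hβ] at this
    simp only at this
    rw [this]
  refine ⟨hEu, ?_, ?_, ?_⟩
  · intro k hk
    exact hcoefform k hk
  · set A : Fin d → ℝ := fun i => E⁻¹ i i0 with hA
    set r : ℕ → ℝ := fun k => (∑ i : Fin d, A i * (k : ℝ) ^ (i : ℕ)) / ω k with hr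
    have hcr : ∀ k, k ≤ n + d → c k = ((r k : ℝ) : ℂ) := fun k hk => hcoefform k hk
    have hmomR : ∀ i, i < d → ∑ k ∈ Finset.range N, r k * (k : ℝ) ^ i
        = if i = 0 then 1 else 0 := by
      intro i hi
      have h1 := hmom i hi
      have h2 : ((∑ k ∈ Finset.range N, r k * (k : ℝ) ^ i : ℝ) : ℂ)
          = ((if i = 0 then (1 : ℝ) else 0 : ℝ) : ℂ) := by
        push_cast
        rw [show ((if i = 0 then (1 : ℝ) else 0 : ℝ) : ℂ) = (if i = 0 then (1 : ℂ) else 0) by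
          split <;> simp, ← h1]
        refine Finset.sum_congr rfl fun k hk => ?_
        rw [hcr k (by have := Finset.mem_range.mp hk; omega)]
      exact Complex.ofReal_injective h2
    rw [hsum p hpdeg]
    have hstep : ∑ k ∈ Finset.range N, ‖(1 - p * g).coeff k‖ ^ 2 * ω k
        = ∑ k ∈ Finset.range N, r k * (∑ i : Fin d, A i * (k : ℝ) ^ (i : ℕ)) := by
      refine Finset.sum_congr rfl fun k hk => ?_
      have hkle : k ≤ n + d := by have := Finset.mem_range.mp hk; omega
      have h3 : (1 - p * g).coeff k = ((r k : ℝ) : ℂ) := hcr k hkle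
      rw [h3, Complex.norm_real, Real.norm_eq_abs, sq_abs]
      have h4 : r k * ω k = ∑ i : Fin d, A i * (k : ℝ) ^ (i : ℕ) :=
        div_mul_cancel₀ _ (hωne k)
      calc r k ^ 2 * ω k = r k * (r k * ω k) := by ring
        _ = r k * (∑ i : Fin d, A i * (k : ℝ) ^ (i : ℕ)) := by rw [h4]
    rw [hstep]
    have hswap : ∑ k ∈ Finset.range N, r k * (∑ i : Fin d, A i * (k : ℝ) ^ (i : ℕ))
        = ∑ i : Fin d, A i * ∑ k ∈ Finset.range N, r k * (k : ℝ) ^ (i : ℕ) := by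
      simp_rw [Finset.mul_sum]
      rw [Finset.sum_comm]
      refine Finset.sum_congr rfl fun i _ => ?_
      refine Finset.sum_congr rfl fun k _ => by ring
    rw [hswap]
    rw [Finset.sum_eq_single i0]
    · have h5 : ((i0 : ℕ)) = 0 := rfl
      rw [h5, hmomR 0 hd, if_pos rfl, mul_one]
    · intro i _ hii
      rw [hmomR (i : ℕ) i.isLt, if_neg (fun h => hii (Fin.ext (by simpa using h))), mul_zero]
    · intro h
      exact absurd (Finset.mem_univ i0) h
  · rw [← Polynomial.coeff_zero_eq_eval_zero]
    show c 0 = ((E⁻¹ i0 i0 : ℝ) : ℂ)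
    rw [hcoefform 0 (by omega), Complex.ofReal_inj]
    rw [Nat.cast_zero, hω0, div_one, Finset.sum_eq_single i0]
    · have h5 : ((i0 : ℕ)) = 0 := rfl
      rw [h5, pow_zero, mul_one]
    · intro i _ hii
      rw [zero_pow (fun h => hii (Fin.ext (by simpa using h))), mul_zero]
    · intro h
      exact absurd (Finset.mem_univ i0) h
end
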